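/- Let X and Y be two standard Borel measurable spaces, let T : X → X and S : Y → Y be invertible bi-measurable transformations, and let σ be a σ-finite measure on X × Y such that: (i) there exist measurable X₀ ⊂ X and Y₀ ⊂ Y with 0 < σ(X₀ × Y₀) < ∞; (ii) σ is T×S-invariant; (iii) the dynamical system (X×Y, T×S, σ) is conservative and ergodic; (iv) Id×S is nonsingular with respect to σ. Then σ is in fact Id×S-invariant, and there exist two measures μ on X and ν on Y, invariant by T and S respectively, such that σ = μ ⊗ ν. Moreover, the dynamical systems (X, μ, T) and (Y, ν, S) are conservative and ergodic. -/

import Mathlib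

open MeasureTheory Set
open scoped ENNReal NNReal Classical

noncomputable section

/-- Heights of the towers of the infinite Chacon transformation
(tower `0` is `[0,1)` with a single level, so `chaconH 1 = 8`). -/
def chaconH : ℕ → ℕ
  | 0 => 1
  | n + 1 => 2 * (3 * chaconH n + 1)

/-- Left endpoint of level `k` of tower `n`.  At step `n+1`, tower `n` (which fills
`[0, hₙ·3⁻ⁿ)`) is cut into three subcolumns of equal width; one spacer is added above the
middle subcolumn and `3hₙ+1` spacers above the third one, the spacers being taken
successively as the leftmost intervals of length `3⁻⁽ⁿ⁺¹⁾` in the unused part of `ℝ₊`;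
then the three subcolumns are stacked left under right. -/
def chaconL : ℕ → ℕ → ℝ
  | 0, _ => 0
  | n + 1, k =>
      if k < chaconH n then chaconL n k
      else if k < 2 * chaconH n then chaconL n (k - chaconH n) + (3 : ℝ)⁻¹ ^ (n + 1)
      else if k = 2 * chaconH n then (chaconH n : ℝ) * (3 : ℝ)⁻¹ ^ n
      else if k ≤ 3 * chaconH n then
        chaconL n (k - 2 * chaconH n - 1) + 2 * (3 : ℝ)⁻¹ ^ (n + 1)
      else (chaconH n : ℝ) * (3 : ℝ)⁻¹ ^ n
        + ((k : ℝ) - 3 * (chaconH n : ℝ)) * (3 : ℝ)⁻¹ ^ (n + 1)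

/-- Level `k` of tower `n`: an interval of length `3⁻ⁿ`, closed to the left and open to
the right. -/
def chaconLevel (n k : ℕ) : Set ℝ := Ico (chaconL n k) (chaconL n k + (3 : ℝ)⁻¹ ^ n)

/-- The Chacon transformation on `ℝ`: each point of a non-top level of some tower is sent
to the point directly above it (the value does not depend on the choice of the tower). -/
def chaconT0 (x : ℝ) : ℝ :=
  if h : ∃ p : ℕ × ℕ, p.2 + 1 < chaconH p.1 ∧ x ∈ chaconLevel p.1 p.2 then
    x - chaconL h.choose.1 h.choose.2 + chaconL h.choose.1 (h.choose.2 + 1)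
  else x

/-- The inverse of the Chacon transformation on `ℝ`. -/
def chaconT0inv (x : ℝ) : ℝ :=
  if h : ∃ p : ℕ × ℕ, p.2 + 1 < chaconH p.1 ∧ x ∈ chaconLevel p.1 (p.2 + 1) then
    x - chaconL h.choose.1 (h.choose.2 + 1) + chaconL h.choose.1 h.choose.2
  else x

/-- The space `X = ℝ₊`. -/
abbrev ChaconX : Type := ↥(Set.Ici (0 : ℝ))

/-- The infinite Chacon transformation `T` on `X = ℝ₊`. -/
def chaconT (x : ChaconX) : ChaconX :=
  ⟨max 0 (chaconT0 (x : ℝ)), Set.mem_Ici.mpr (le_max_left 0 _)⟩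

/-- The inverse `T⁻¹` of the Chacon transformation on `X = ℝ₊`. -/
def chaconTinv (x : ChaconX) : ChaconX :=
  ⟨max 0 (chaconT0inv (x : ℝ)), Set.mem_Ici.mpr (le_max_left 0 _)⟩

/-- Integer powers `T^j` of the Chacon transformation. -/
def chaconTZ (j : ℤ) : ChaconX → ChaconX :=
  if 0 ≤ j then chaconT^[j.toNat] else chaconTinv^[(-j).toNat]

/-- Lebesgue measure `μ` on `X = ℝ₊`. -/
def chaconMu : Measure ChaconX := volume.comap Subtype.val

/-- `C n`: the bottom half of tower `n` (its lowest `hₙ/2` levels), as a subset of `X`. -/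
def chaconC (n : ℕ) : Set ChaconX :=
  {x | ∃ k, k < chaconH n / 2 ∧ (x : ℝ) ∈ chaconLevel n k}

/-- `tₙ x ∈ {1,2,3}`: the subcolumn of tower `n` containing `x`
(junk value `0` if `x` is not in tower `n`). -/
def chaconTn (n : ℕ) (x : ChaconX) : ℕ :=
  if h : ∃ k, k < chaconH n ∧ (x : ℝ) ∈ chaconLevel n k then
    1 + (⌊((x : ℝ) - chaconL n h.choose) * (3 : ℝ) ^ (n + 1)⌋).toNat
  else 0

/-- The Cartesian power `T^{×ι}` of the Chacon transformation, acting coordinatewise. -/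
def chaconTd (ι : Type) (x : ι → ChaconX) : ι → ChaconX := fun i => chaconT (x i)

/-- Integer powers `(T^{×ι})^j`, acting coordinatewise. -/
def chaconTdZ (ι : Type) (j : ℤ) (x : ι → ChaconX) : ι → ChaconX := fun i => chaconTZ j (x i)

/-- `Cₙ^ι ⊆ X^ι`. -/
def chaconCd (ι : Type) (n : ℕ) : Set (ι → ChaconX) := {x | ∀ i, x i ∈ chaconC n}

/-- An `n`-box: a Cartesian product of levels of `C n`. -/
def IsNBox (ι : Type) (n : ℕ) (B : Set (ι → ChaconX)) : Prop :=
  ∃ k : ι → ℕ, (∀ i, k i < chaconH n / 2) ∧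
    B = {x : ι → ChaconX | ∀ i, ((x i : ℝ)) ∈ chaconLevel n (k i)}

/-- An `n`-diagonal: a maximal finite family of `n`-boxes `B, T^{×d}B, …, (T^{×d})^ℓ B`,
regarded as the union of its boxes. -/
def IsNDiagonal (ι : Type) (n : ℕ) (D : Set (ι → ChaconX)) : Prop :=
  ∃ (B : Set (ι → ChaconX)) (ℓ : ℕ),
    (∀ j : ℕ, j ≤ ℓ → IsNBox ι n (chaconTdZ ι (j : ℤ) '' B)) ∧
    ¬ chaconTdZ ι (-1) '' B ⊆ chaconCd ι n ∧
    ¬ chaconTdZ ι ((ℓ : ℤ) + 1) '' B ⊆ chaconCd ι n ∧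
    D = ⋃ j ∈ Finset.range (ℓ + 1), chaconTdZ ι (j : ℤ) '' B

/-- A measure is boundedly finite if bounded (measurable) sets have finite measure. -/
def BoundedlyFinite {α : Type*} [MeasurableSpace α] [PseudoMetricSpace α]
    (σ : Measure α) : Prop :=
  ∀ A : Set α, MeasurableSet A → Bornology.IsBounded A → σ A < ⊤

/-- Diagonal measures on `X^ι`: boundedly finite, `T^{×ι}`-invariant measures which are,
for every large enough `n`, concentrated on a single `n`-diagonal inside `Cₙ^ι`. -/
def IsDiagonalMeasure (ι : Type) [Fintype ι] (σ : Measure (ι → ChaconX)) : Prop :=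
  BoundedlyFinite σ ∧ σ.map (chaconTd ι) = σ ∧
    ∃ n₀ : ℕ, 1 ≤ n₀ ∧ ∀ n, n₀ ≤ n →
      ∃ D : Set (ι → ChaconX), IsNDiagonal ι n D ∧ σ (chaconCd ι n \ D) = 0

/-- A wandering set for the `ℤ`-action `Uz`. -/
def ZWandering {α : Type*} (Uz : ℤ → α → α) (W : Set α) : Prop :=
  ∀ j k : ℤ, j ≠ k → Disjoint (Uz j '' W) (Uz k '' W)

/-- Conservativity: every measurable wandering set is null. -/
def ZConservative {α : Type*} [MeasurableSpace α] (σ : Measure α) (Uz : ℤ → α → α) : Prop :=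
  ∀ W : Set α, MeasurableSet W → ZWandering Uz W → σ W = 0

/-- Total dissipativity: mod `σ`, the space is the disjoint union of the iterates of a
wandering set. -/
def ZTotallyDissipative {α : Type*} [MeasurableSpace α] (σ : Measure α)
    (Uz : ℤ → α → α) : Prop :=
  ∃ W : Set α, MeasurableSet W ∧ ZWandering Uz W ∧ σ ((⋃ j : ℤ, Uz j '' W)ᶜ) = 0

/-- Ergodicity of a (not necessarily finite) invariant measure: every invariant
measurable set is null or conull. -/
def MeasErgodic {α : Type*} [MeasurableSpace α] (σ : Measure α) (U : α → α) : Prop :=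
  ∀ A : Set α, MeasurableSet A → U ⁻¹' A = A → σ A = 0 ∨ σ Aᶜ = 0

/-- `Icc a b` is an `n`-crossing for `x`: a maximal finite set of consecutive integers `j`
with `(T^{×ι})^j x ∈ Cₙ^ι`. -/
def IsCrossing (ι : Type) (n : ℕ) (x : ι → ChaconX) (a b : ℤ) : Prop :=
  a ≤ b ∧ (∀ j : ℤ, a ≤ j → j ≤ b → chaconTdZ ι j x ∈ chaconCd ι n) ∧
    chaconTdZ ι (a - 1) x ∉ chaconCd ι n ∧ chaconTdZ ι (b + 1) x ∉ chaconCd ι n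

/-- `n(x)`: the smallest `n ≥ 1` with `x ∈ Cₙ^ι`. -/
def chaconNOf (ι : Type) (x : ι → ChaconX) : ℕ :=
  if h : ∃ n : ℕ, 1 ≤ n ∧ x ∈ chaconCd ι n then Nat.find h else 0

/-- `B(τ)`: the points of `B` whose coordinate `i` lies in subcolumn `τ i` of tower `n`. -/
def chaconBoxTau (ι : Type) (n : ℕ) (B : Set (ι → ChaconX)) (τ : ι → ℕ) :
    Set (ι → ChaconX) :=
  {x ∈ B | ∀ i, chaconTn n (x i) = τ i}

/-- The transition from the `n`-diagonal `D` to the `(n+1)`-diagonal `D'` is the central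
one, i.e. `D' = D(1,…,1)`. -/
def CentralTransition (ι : Type) (n : ℕ) (D D' : Set (ι → ChaconX)) : Prop :=
  ∀ B : Set (ι → ChaconX), IsNBox ι n B → B ⊆ D →
    chaconBoxTau ι n B (fun _ => 1) ⊆ D'

/-- The `n`-diagonal containing a given set (junk value `∅` if there is none). -/
def diagOfBox (ι : Type) (n : ℕ) (B : Set (ι → ChaconX)) : Set (ι → ChaconX) :=
  if h : ∃ D, IsNDiagonal ι n D ∧ B ⊆ D then h.choose else ∅

/-- `D(τ)`: the `(n+1)`-diagonal containing `B(τ)` for an `n`-box `B ⊆ D`. -/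
def diagTau (ι : Type) (n : ℕ) (D : Set (ι → ChaconX)) (τ : ι → ℕ) : Set (ι → ChaconX) :=
  if h : ∃ B, IsNBox ι n B ∧ B ⊆ D then diagOfBox ι (n + 1) (chaconBoxTau ι n h.choose τ)
  else ∅

/-- A consistent family of diagonals `(Dₙ)_{n ≥ n₀}`. -/
def IsConsistentFamily (ι : Type) (n₀ : ℕ) (D : ℕ → Set (ι → ChaconX)) : Prop :=
  (∀ n, n₀ ≤ n → IsNDiagonal ι n (D n)) ∧
    (chaconCd ι (n₀ - 1) ∩ ⋂ n, ⋂ (_ : n₀ ≤ n), D n).Nonempty ∧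
    ∀ n, n₀ ≤ n → D (n + 1) ∩ chaconCd ι n ⊆ D n

/-- `x` is seen by the family of diagonals `(Dₙ)_{n ≥ n₀}`. -/
def SeenByFam (ι : Type) (n₀ : ℕ) (D : ℕ → Set (ι → ChaconX)) (x : ι → ChaconX) : Prop :=
  ∀ n, n₀ ≤ n → x ∉ chaconCd ι n ∨ x ∈ D n

/-- Graph joinings arising from powers of `T`:
`σ(A₁ × ⋯ × A_d) = α μ(T^{-k₁}A₁ ∩ ⋯ ∩ T^{-k_d}A_d)` for some `0 < α < ∞`. -/
def IsGraphJoining (ι : Type) [Fintype ι] (σ : Measure (ι → ChaconX)) : Prop :=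
  ∃ (α : ℝ≥0∞) (k : ι → ℤ), 0 < α ∧ α ≠ ⊤ ∧
    ∀ A : ι → Set ChaconX, (∀ i, MeasurableSet (A i)) →
      σ (Set.univ.pi A) = α * chaconMu (⋂ i, chaconTZ (k i) ⁻¹' A i)

/-- Ergodic components of `σ`: the nonzero boundedly finite `T^{×ι}`-invariant ergodic
measures, absolutely continuous with respect to `σ`, which appear in its ergodic
decomposition. -/
def IsErgodicComponent (ι : Type) [Fintype ι] (σ ρ : Measure (ι → ChaconX)) : Prop :=
  ρ ≠ 0 ∧ BoundedlyFinite ρ ∧ ρ.map (chaconTd ι) = ρ ∧ MeasErgodic ρ (chaconTd ι) ∧ ρ ≪ σ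

end



open scoped symmDiff

namespace PTAux

section ZItBasic
variable {α : Type*}

/-- Integer iterates, in the exact form used in the statements. -/
def zIt (f finv : α → α) (j : ℤ) : α → α :=
  if 0 ≤ j then f^[j.toNat] else finv^[(-j).toNat]

theorem zIt_zero (f finv : α → α) : zIt f finv 0 = id := by
  simp [zIt]

theorem zIt_comp_apply {f finv : α → α} (hl : Function.LeftInverse finv f) (j : ℤ) (x : α) :
    zIt f finv j (f x) = zIt f finv (j + 1) x := by
  unfold zIt
  rcases le_or_gt 0 j with hj | hj
  · rw [if_pos hj, if_pos (by omega)]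
    have h : (j + 1).toNat = j.toNat + 1 := by omega
    rw [h, Function.iterate_succ_apply]
  · rw [if_neg (by omega)]
    rcases eq_or_lt_of_le (by omega : j + 1 ≤ 0) with h0 | h0
    · rw [if_pos (le_of_eq h0.symm)]
      have h1 : (-j).toNat = 1 := by omega
      have h2 : (j + 1).toNat = 0 := by omega
      rw [h1, h2]
      simpa using hl x
    · rw [if_neg (by omega)]
      have h1 : (-j).toNat = (-(j + 1)).toNat + 1 := by omega
      rw [h1, Function.iterate_succ_apply]
      congr 1
      exact hl x

theorem zIt_cancel {f finv : α → α} (hr : Function.RightInverse finv f) (j : ℤ) (n : ℕ)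
    (hnj : 0 ≤ (n : ℤ) + j) (x : α) :
    f^[n] (zIt f finv j x) = f^[((n : ℤ) + j).toNat] x := by
  unfold zIt
  rcases le_or_gt 0 j with hj | hj
  · rw [if_pos hj, ← Function.iterate_add_apply]
    congr 1
    omega
  · rw [if_neg (by omega)]
    set m := (-j).toNat with hm
    have hmn : m ≤ n := by omega
    have h1 : f^[n] (finv^[m] x) = f^[n - m] (f^[m] (finv^[m] x)) := by
      rw [← Function.iterate_add_apply]
      congr 1
      omega
    rw [h1, (hr.iterate m) x]
    congr 1
    omega

theorem zIt_measurable [MeasurableSpace α] {f finv : α → α} (hf : Measurable f)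
    (hfinv : Measurable finv) (j : ℤ) : Measurable (zIt f finv j) := by
  unfold zIt
  split
  · exact hf.iterate _
  · exact hfinv.iterate _

/-- Key wandering-set construction lemma. -/
theorem zWandering_of_forward {f finv : α → α} (hl : Function.LeftInverse finv f)
    (hr : Function.RightInverse finv f) {W : Set α}
    (hW : ∀ (n : ℕ), ∀ x ∈ W, f^[n + 1] x ∉ W) :
    ZWandering (fun j : ℤ => if 0 ≤ j then f^[j.toNat] else finv^[(-j).toNat]) W := by
  have key : ∀ (a b : ℕ) (x y : α), x ∈ W → y ∈ W → a < b → f^[a] x = f^[b] y → False := by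
    intro a b x y hx hy hab he
    have hb : b = a + ((b - a - 1) + 1) := by omega
    rw [hb, Function.iterate_add_apply] at he
    have hxy : x = f^[b - a - 1 + 1] y := (hl.injective.iterate a) he
    exact hW _ y hy (hxy ▸ hx)
  intro j k hjk
  rw [Set.disjoint_left]
  rintro z ⟨x, hx, hxz⟩ ⟨y, hy, hyz⟩
  set n₀ : ℕ := (-j).toNat + (-k).toNat with hn₀
  have hnj : 0 ≤ (n₀ : ℤ) + j := by omega
  have hnk : 0 ≤ (n₀ : ℤ) + k := by omega
  have e1 : f^[n₀] z = f^[((n₀ : ℤ) + j).toNat] x := by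
    rw [← hxz]; exact zIt_cancel hr j n₀ hnj x
  have e2 : f^[n₀] z = f^[((n₀ : ℤ) + k).toNat] y := by
    rw [← hyz]; exact zIt_cancel hr k n₀ hnk y
  have hne : ((n₀ : ℤ) + j).toNat ≠ ((n₀ : ℤ) + k).toNat := by omega
  rcases lt_or_gt_of_ne hne with h | h
  · exact key _ _ x y hx hy h (e1.symm.trans e2)
  · exact key _ _ y x hy hx h (e2.symm.trans e1)


section Meas
variable [MeasurableSpace α] {m : Measure α} {f finv : α → α}

/-- invariance transfers to iterates of `f`. -/
theorem meas_iter_preimage (hf : Measurable f) (hm : m.map f = m) (n : ℕ)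
    {N : Set α} (hN : MeasurableSet N) : m (f^[n] ⁻¹' N) = m N := by
  induction n with
  | zero => simp
  | succ n ih =>
      have h1 : f^[n + 1] ⁻¹' N = f ⁻¹' (f^[n] ⁻¹' N) := by
        rw [Function.iterate_succ, Set.preimage_comp]
      rw [h1, ← Measure.map_apply hf ((hf.iterate n) hN), hm, ih]

theorem meas_iter_preimage_inv (hf : Measurable f) (hfinv : Measurable finv)
    (hl : Function.LeftInverse finv f) (hm : m.map f = m) (n : ℕ)
    {N : Set α} (hN : MeasurableSet N) : m (finv^[n] ⁻¹' N) = m N := by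
  have h1 : f^[n] ⁻¹' (finv^[n] ⁻¹' N) = N := by
    rw [← Set.preimage_comp, (hl.iterate n).comp_eq_id, Set.preimage_id]
  calc m (finv^[n] ⁻¹' N) = m (f^[n] ⁻¹' (finv^[n] ⁻¹' N)) :=
        (meas_iter_preimage hf hm n ((hfinv.iterate n) hN)).symm
    _ = m N := by rw [h1]

theorem meas_zIt_preimage (hf : Measurable f) (hfinv : Measurable finv)
    (hl : Function.LeftInverse finv f) (hm : m.map f = m) (j : ℤ)
    {N : Set α} (hN : MeasurableSet N) : m (zIt f finv j ⁻¹' N) = m N := by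
  unfold zIt
  split
  · exact meas_iter_preimage hf hm _ hN
  · exact meas_iter_preimage_inv hf hfinv hl hm _ hN

/-- The `ℤ`-saturation of a set. -/
def sat (f finv : α → α) (E : Set α) : Set α := ⋃ j : ℤ, zIt f finv j ⁻¹' E

theorem subset_sat (f finv : α → α) (E : Set α) : E ⊆ sat f finv E := by
  intro x hx
  exact Set.mem_iUnion.2 ⟨0, by simpa [zIt] using hx⟩

theorem sat_measurableSet (hf : Measurable f) (hfinv : Measurable finv)
    {E : Set α} (hE : MeasurableSet E) : MeasurableSet (sat f finv E) :=
  MeasurableSet.iUnion fun j => (zIt_measurable hf hfinv j) hE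

theorem preimage_sat (hl : Function.LeftInverse finv f) (E : Set α) :
    f ⁻¹' sat f finv E = sat f finv E := by
  ext x
  simp only [sat, Set.mem_iUnion, Set.mem_preimage]
  constructor
  · rintro ⟨j, hj⟩
    refine ⟨j + 1, ?_⟩
    rw [← zIt_comp_apply hl j x]
    exact hj
  · rintro ⟨j, hj⟩
    refine ⟨j - 1, ?_⟩
    rw [zIt_comp_apply hl (j - 1) x]
    simpa using hj

/-- mod-`m` invariant sets are close to their saturation. -/
theorem sat_symmDiff_null (hf : Measurable f) (hfinv : Measurable finv)
    (hl : Function.LeftInverse finv f) (hm : m.map f = m)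
    {B : Set α} (hB : MeasurableSet B) (hinvB : m ((f ⁻¹' B) ∆ B) = 0) :
    m (sat f finv B ∆ B) = 0 := by
  have hiter : ∀ n : ℕ, m ((f^[n] ⁻¹' B) ∆ B) = 0 := by
    intro n
    induction n with
    | zero => simp
    | succ n ih =>
        have h1 : (f^[n + 1] ⁻¹' B) ∆ B ⊆ ((f^[n + 1] ⁻¹' B) ∆ (f^[n] ⁻¹' B)) ∪ ((f^[n] ⁻¹' B) ∆ B) :=
          symmDiff_triangle _ _ _
        have h2 : (f^[n + 1] ⁻¹' B) ∆ (f^[n] ⁻¹' B) = f^[n] ⁻¹' ((f ⁻¹' B) ∆ B) := by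
          rw [Set.preimage_symmDiff]
          congr 1
          rw [Function.iterate_succ', Set.preimage_comp]
        have h3 : m (f^[n] ⁻¹' ((f ⁻¹' B) ∆ B)) = 0 := by
          rw [meas_iter_preimage hf hm n]
          · exact hinvB
          · exact ((hf hB).symmDiff hB)
        exact measure_mono_null h1 (measure_union_null (h2 ▸ h3) ih)
  have hiterinv : ∀ n : ℕ, m ((finv^[n] ⁻¹' B) ∆ B) = 0 := by
    intro n
    have h0 : MeasurableSet ((finv^[n] ⁻¹' B) ∆ B) := ((hfinv.iterate n) hB).symmDiff hB
    rw [← meas_iter_preimage hf hm n h0, Set.preimage_symmDiff, ← Set.preimage_comp,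
      (hl.iterate n).comp_eq_id, Set.preimage_id]
    rw [symmDiff_comm]
    exact hiter n
  have hz : ∀ j : ℤ, m ((zIt f finv j ⁻¹' B) ∆ B) = 0 := by
    intro j
    unfold zIt
    split
    · exact hiter _
    · exact hiterinv _
  have hsub : sat f finv B ∆ B ⊆ ⋃ j : ℤ, (zIt f finv j ⁻¹' B) ∆ B := by
    intro x hx
    rcases hx with hx | hx
    · rcases Set.mem_iUnion.1 hx.1 with ⟨j, hj⟩
      exact Set.mem_iUnion.2 ⟨j, Or.inl ⟨hj, hx.2⟩⟩
    · exact Set.mem_iUnion.2 ⟨0, Or.inr ⟨hx.1, fun h => hx.2 (subset_sat f finv B h)⟩⟩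
  exact measure_mono_null hsub (measure_iUnion_null fun j => hz j)

/-- Poincaré-type infinite recurrence from conservativity. -/
theorem recurrence (hf : Measurable f) (hfinv : Measurable finv)
    (hl : Function.LeftInverse finv f) (hr : Function.RightInverse finv f)
    (hm : m.map f = m)
    (hc : ZConservative m (fun j : ℤ => if 0 ≤ j then f^[j.toNat] else finv^[(-j).toNat]))
    {A : Set α} (hA : MeasurableSet A) :
    m (A \ {x | ∀ N : ℕ, ∃ n, N ≤ n ∧ f^[n] x ∈ A}) = 0 := by
  classical
  set W : Set α := A \ ⋃ n : ℕ, f^[n + 1] ⁻¹' A with hW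
  have hWmeas : MeasurableSet W := hA.diff (MeasurableSet.iUnion fun n => (hf.iterate (n + 1)) hA)
  have hWzero : m W = 0 := by
    refine hc W hWmeas (zWandering_of_forward hl hr ?_)
    intro n x hx hfx
    exact hx.2 (Set.mem_iUnion.2 ⟨n, hfx.1⟩)
  have hsub : A \ {x | ∀ N : ℕ, ∃ n, N ≤ n ∧ f^[n] x ∈ A} ⊆ ⋃ ℓ : ℕ, f^[ℓ] ⁻¹' W := by
    intro x hx
    have hx1 : x ∈ A := hx.1
    have hx2 : ∃ N : ℕ, ∀ n, N ≤ n → f^[n] x ∉ A := by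
      by_contra hcon
      push_neg at hcon
      exact hx.2 fun N => hcon N
    obtain ⟨N, hN⟩ := hx2
    set P : ℕ → Prop := fun n => f^[n] x ∈ A with hP
    have hP0 : P 0 := by simpa [hP] using hx1
    have hPl : P (Nat.findGreatest P N) := Nat.findGreatest_spec (Nat.zero_le N) hP0
    refine Set.mem_iUnion.2 ⟨Nat.findGreatest P N, ?_⟩
    show f^[Nat.findGreatest P N] x ∈ W
    constructor
    · exact hPl
    · intro hmem
      obtain ⟨n, hn⟩ := Set.mem_iUnion.1 hmem
      have hn' : f^[(n + 1) + Nat.findGreatest P N] x ∈ A := by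
        rw [Function.iterate_add_apply]
        exact hn
      rcases le_or_gt ((n + 1) + Nat.findGreatest P N) N with hle | hlt
      · have hgg := Nat.findGreatest_is_greatest (P := P) (n := N)
          (k := (n + 1) + Nat.findGreatest P N) (by omega) hle
        exact hgg hn'
      · have : N ≤ (n + 1) + Nat.findGreatest P N := by omega
        exact hN _ this hn'
  refine measure_mono_null hsub (measure_iUnion_null fun ℓ => ?_)
  rw [meas_iter_preimage hf hm ℓ hWmeas, hWzero]

theorem null_of_summable_returns (hf : Measurable f) (hfinv : Measurable finv)
    (hl : Function.LeftInverse finv f) (hr : Function.RightInverse finv f)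
    (hm : m.map f = m)
    (hc : ZConservative m (fun j : ℤ => if 0 ≤ j then f^[j.toNat] else finv^[(-j).toNat]))
    {A : Set α} (hA : MeasurableSet A)
    (hsum : ∑' n : ℕ, m (A ∩ f^[n + 1] ⁻¹' A) ≠ ⊤) : m A = 0 := by
  have hrec := recurrence hf hfinv hl hr hm hc hA
  have hbc := measure_limsup_atTop_eq_zero (μ := m) (s := fun n => A ∩ f^[n + 1] ⁻¹' A) hsum
  rw [Filter.limsup_eq_iInf_iSup_of_nat] at hbc
  have hsub : A ⊆ (A \ {x | ∀ N : ℕ, ∃ n, N ≤ n ∧ f^[n] x ∈ A}) ∪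
      (⨅ n, ⨆ i, ⨆ (_ : i ≥ n), (A ∩ f^[i + 1] ⁻¹' A)) := by
    intro x hx
    by_cases hL : x ∈ {x | ∀ N : ℕ, ∃ n, N ≤ n ∧ f^[n] x ∈ A}
    · right
      simp only [Set.iInf_eq_iInter, Set.mem_iInter, Set.iSup_eq_iUnion, Set.mem_iUnion]
      intro N
      obtain ⟨n, hn1, hn2⟩ := hL (N + 1)
      refine ⟨n - 1, by omega, hx, ?_⟩
      show f^[n - 1 + 1] x ∈ A
      rw [show n - 1 + 1 = n by omega]
      exact hn2
    · exact Or.inl ⟨hx, hL⟩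
  refine le_antisymm ?_ zero_le
  calc m A ≤ m ((A \ {x | ∀ N : ℕ, ∃ n, N ≤ n ∧ f^[n] x ∈ A}) ∪
      (⨅ n, ⨆ i, ⨆ (_ : i ≥ n), (A ∩ f^[i + 1] ⁻¹' A))) := measure_mono hsub
    _ ≤ m (A \ {x | ∀ N : ℕ, ∃ n, N ≤ n ∧ f^[n] x ∈ A}) +
        m (⨅ n, ⨆ i, ⨆ (_ : i ≥ n), (A ∩ f^[i + 1] ⁻¹' A)) := measure_union_le _ _
    _ = 0 := by rw [hrec, hbc, add_zero]

end Meas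

end ZItBasic

section Prop1
variable {β : Type*} [MeasurableSpace β]

/-- From a null/conull dichotomy on sublevel sets, a function is a.e. constant. -/
theorem ae_const_of_dichotomy (m : Measure β) (f : β → ℝ≥0∞)
    (hd : ∀ t : ℝ≥0∞, m {x | f x ≤ t} = 0 ∨ m {x | t < f x} = 0) :
    ∃ c : ℝ≥0∞, ∀ᵐ x ∂m, f x = c := by
  classical
  set S : Set ℝ≥0∞ := {t | m {x | t < f x} = 0} with hS
  set c : ℝ≥0∞ := sInf S with hc
  have h1 : ∀ t, c < t → m {x | t < f x} = 0 := by
    intro t ht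
    obtain ⟨s, hsS, hst⟩ := sInf_lt_iff.1 ht
    exact measure_mono_null (fun x hx => lt_trans hst hx) hsS
  have h2 : ∀ t, t < c → m {x | f x ≤ t} = 0 := by
    intro t ht
    rcases hd t with h | h
    · exact h
    · exact absurd (csInf_le (OrderBot.bddBelow S) h) (not_le.2 ht)
  refine ⟨c, ?_⟩
  have hgt : m {x | c < f x} = 0 := by
    rcases eq_or_ne c ⊤ with hctop | hctop
    · have : {x | c < f x} = ∅ := by
        ext x; simp [hctop]
      simp [this]
    · obtain ⟨u, -, hu2, hu3⟩ := exists_seq_strictAnti_tendsto' (lt_top_iff_ne_top.2 hctop)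
      have hsub : {x | c < f x} ⊆ ⋃ n, {x | u n < f x} := by
        intro x hx
        have := (hu3.eventually_lt_const hx).exists
        obtain ⟨n, hn⟩ := this
        exact Set.mem_iUnion.2 ⟨n, hn⟩
      exact measure_mono_null hsub (measure_iUnion_null fun n => h1 _ (hu2 n).1)
  have hlt : m {x | f x < c} = 0 := by
    rcases eq_or_ne c 0 with hc0 | hc0
    · have : {x | f x < c} = ∅ := by
        ext x; simp [hc0]
      simp [this]
    · obtain ⟨u, -, hu2, hu3⟩ := exists_seq_strictMono_tendsto' (pos_iff_ne_zero.2 hc0)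
      have hsub : {x | f x < c} ⊆ ⋃ n, {x | f x ≤ u n} := by
        intro x hx
        obtain ⟨n, hn⟩ := (hu3.eventually_const_lt hx).exists
        exact Set.mem_iUnion.2 ⟨n, le_of_lt hn⟩
      exact measure_mono_null hsub (measure_iUnion_null fun n => h2 _ (hu2 n).2)
  rw [Filter.eventually_iff, mem_ae_iff]
  have hsub : {x | f x = c}ᶜ ⊆ {x | f x < c} ∪ {x | c < f x} := by
    intro x hx
    rcases lt_or_gt_of_ne (hx : ¬ f x = c) with h | h
    · exact Or.inl h
    · exact Or.inr h
  exact measure_mono_null hsub (measure_union_null hlt hgt)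

/-- Existence of a maximal set in a countable-union-stable class, w.r.t. a finite measure. -/
theorem exists_maximal_carrier (lam : Measure β) [IsFiniteMeasure lam]
    (p : Set β → Prop) (hp0 : p ∅)
    (hpU : ∀ g : ℕ → Set β, (∀ n, MeasurableSet (g n) ∧ p (g n)) → p (⋃ n, g n)) :
    ∃ H, MeasurableSet H ∧ p H ∧ ∀ F, MeasurableSet F → p F → lam (F \ H) = 0 := by
  classical
  set s : ℝ≥0∞ := ⨆ (F : {F : Set β // MeasurableSet F ∧ p F}), lam F.1 with hs
  have hsfin : s ≠ ⊤ := by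
    refine ne_top_of_le_ne_top (measure_ne_top lam univ) ?_
    exact iSup_le fun F => measure_mono (Set.subset_univ _)
  have hex : ∀ n : ℕ, ∃ F : {F : Set β // MeasurableSet F ∧ p F},
      s - 1 / (n + 1) < lam F.1 ∨ s = 0 := by
    intro n
    rcases eq_or_ne s 0 with h0 | h0
    · exact ⟨⟨∅, MeasurableSet.empty, hp0⟩, Or.inr h0⟩
    · have hlt : s - 1 / (n + 1) < s := ENNReal.sub_lt_self hsfin h0 (by simp)
      rw [hs] at hlt
      obtain ⟨F, hF⟩ := lt_iSup_iff.1 hlt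
      exact ⟨F, Or.inl hF⟩
  choose G hG using hex
  set H : Set β := ⋃ n, (G n).1 with hH
  have hHmeas : MeasurableSet H := MeasurableSet.iUnion fun n => (G n).2.1
  have hHp : p H := hpU _ fun n => (G n).2
  refine ⟨H, hHmeas, hHp, ?_⟩
  intro F hF hpF
  have hFH : lam (F ∪ H) ≤ s := by
    have hpFH : p (F ∪ H) := by
      have h2 := hpU (fun n => if n = 0 then F else (G (n - 1)).1) ?_
      · have he : (⋃ n, if n = 0 then F else (G (n - 1)).1) = F ∪ H := by
          apply Set.Subset.antisymm
          · intro x hx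
            obtain ⟨n, hn⟩ := Set.mem_iUnion.1 hx
            by_cases h : n = 0
            · rw [h] at hn; simp at hn; exact Or.inl hn
            · rw [if_neg h] at hn; exact Or.inr (Set.mem_iUnion.2 ⟨n - 1, hn⟩)
          · rintro x (hx | hx)
            · exact Set.mem_iUnion.2 ⟨0, by simpa using hx⟩
            · obtain ⟨n, hn⟩ := Set.mem_iUnion.1 hx
              exact Set.mem_iUnion.2 ⟨n + 1, by simpa using hn⟩
        rwa [he] at h2
      · intro n
        by_cases h : n = 0
        · simp [h, hF, hpF]
        · simp [h, (G (n - 1)).2.1, (G (n - 1)).2.2]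
    exact le_iSup_of_le (i := ⟨F ∪ H, hF.union hHmeas, hpFH⟩) le_rfl
  have key : ∀ n : ℕ, lam (F \ H) ≤ 1 / (n + 1) := by
    intro n
    rcases hG n with hGn | h0
    · have hb : s - 1 / (n + 1) < lam H :=
        lt_of_lt_of_le hGn (measure_mono (Set.subset_iUnion (fun k => (G k).1) n))
      by_contra hcon
      push_neg at hcon
      have hsum : lam (F \ H) + lam H ≤ s := by
        rw [← measure_union disjoint_sdiff_left hHmeas, Set.diff_union_self]
        exact hFH
      rcases le_or_gt (1 / ((n : ℝ≥0∞) + 1)) s with hns | hns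
      · have hlt2 : s < lam (F \ H) + lam H := by
          have he : 1 / ((n : ℝ≥0∞) + 1) + (s - 1 / ((n : ℝ≥0∞) + 1)) = s := by
            rw [add_comm]
            exact tsub_add_cancel_of_le hns
          calc s = 1 / ((n : ℝ≥0∞) + 1) + (s - 1 / ((n : ℝ≥0∞) + 1)) := he.symm
            _ < lam (F \ H) + lam H := ENNReal.add_lt_add hcon hb
        exact absurd hsum (not_le.2 hlt2)
      · have hle3 : lam (F \ H) ≤ s :=
          le_trans (measure_mono (le_trans Set.diff_subset Set.subset_union_left)) hFH
        exact absurd (lt_of_le_of_lt hle3 hns) (not_lt.2 (le_of_lt hcon))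
    · have hle3 : lam (F \ H) ≤ s :=
        le_trans (measure_mono (le_trans Set.diff_subset Set.subset_union_left)) hFH
      rw [h0] at hle3
      simp only [nonpos_iff_eq_zero.1 hle3]
      exact zero_le
  by_contra hne
  obtain ⟨n, hn⟩ := ENNReal.exists_inv_nat_lt hne
  have h1 : lam (F \ H) ≤ 1 / ((n : ℝ≥0∞) + 1) := key n
  have h2 : (1 : ℝ≥0∞) / ((n : ℝ≥0∞) + 1) ≤ ((n : ℝ≥0∞))⁻¹ := by
    rw [one_div]
    exact ENNReal.inv_le_inv.2 (by simp)
  exact absurd (lt_of_lt_of_le hn (le_trans h1 h2)) (lt_irrefl _)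


/-- Two invariant σ-finite measures with a.c. relation under an "ergodic" oracle are
proportional. -/
theorem proportional_of_invariant (m m' : Measure β) [SigmaFinite m] [SigmaFinite m']
    (g ginv : β → β) (hg : Measurable g) (hginv : Measurable ginv)
    (hgl : Function.LeftInverse ginv g)
    (hm : m.map g = m) (hm' : m'.map g = m') (hac : m' ≪ m)
    (oracle : ∀ B, MeasurableSet B → m ((g ⁻¹' B) ∆ B) = 0 → m B = 0 ∨ m Bᶜ = 0) :
    ∃ c : ℝ≥0∞, m' = c • m := by
  classical
  set f : β → ℝ≥0∞ := m'.rnDeriv m with hf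
  have hfmeas : Measurable f := Measure.measurable_rnDeriv m' m
  have hm'inv : ∀ N : Set β, MeasurableSet N → m' (ginv ⁻¹' N) = m' N := by
    intro N hN
    have h1 : m' (g ⁻¹' (ginv ⁻¹' N)) = m' (ginv ⁻¹' N) := by
      rw [← Measure.map_apply hg (hginv hN), hm']
    rw [← Set.preimage_comp, hgl.comp_eq_id, Set.preimage_id] at h1
    exact h1.symm
  have key : ∀ A : Set β, MeasurableSet A →
      ∫⁻ x in A, f (g x) ∂m = ∫⁻ x in A, f x ∂m := by
    intro A hA
    have hs : MeasurableSet (ginv ⁻¹' A) := hginv hA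
    have h1 : ∫⁻ y in ginv ⁻¹' A, f y ∂(m.map g) = ∫⁻ x in g ⁻¹' (ginv ⁻¹' A), f (g x) ∂m :=
      setLIntegral_map hs hfmeas hg
    rw [hm, ← Set.preimage_comp, hgl.comp_eq_id, Set.preimage_id] at h1
    have h2 : ∫⁻ y in ginv ⁻¹' A, f y ∂m = m' (ginv ⁻¹' A) :=
      Measure.setLIntegral_rnDeriv hac _
    have h3 : ∫⁻ x in A, f x ∂m = m' A := Measure.setLIntegral_rnDeriv hac _
    rw [← h1, h2, hm'inv A hA, h3]
  have hae : (fun x => f (g x)) =ᵐ[m] f :=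
    ae_eq_of_forall_setLIntegral_eq_of_sigmaFinite (hfmeas.comp hg) hfmeas
      (fun s hs _ => key s hs)
  have hnull : m {x | ¬ f (g x) = f x} = 0 := ae_iff.1 hae
  have hdich : ∀ t : ℝ≥0∞, m {x | f x ≤ t} = 0 ∨ m {x | t < f x} = 0 := by
    intro t
    have hBmeas : MeasurableSet {x | f x ≤ t} := hfmeas measurableSet_Iic
    have hBd : m ((g ⁻¹' {x | f x ≤ t}) ∆ {x | f x ≤ t}) = 0 := by
      refine measure_mono_null ?_ hnull
      rintro x (⟨h1, h2⟩ | ⟨h1, h2⟩)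
      · intro he
        apply h2
        have h1' : f (g x) ≤ t := h1
        show f x ≤ t
        rw [← he]
        exact h1'
      · intro he
        apply h2
        have h1' : f x ≤ t := h1
        show f (g x) ≤ t
        rw [he]
        exact h1'
    rcases oracle _ hBmeas hBd with h | h
    · exact Or.inl h
    · refine Or.inr ?_
      have hco : {x | f x ≤ t}ᶜ = {x | t < f x} := by
        ext x
        simp [not_le]
      rw [← hco]
      exact h
  obtain ⟨c, hc⟩ := ae_const_of_dichotomy m f hdich
  refine ⟨c, ?_⟩
  have h4 : m.withDensity f = m' := Measure.withDensity_rnDeriv_eq m' m hac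
  rw [← h4, withDensity_congr_ae (hc : f =ᵐ[m] fun _ => c), withDensity_const]


end Prop1

section ProdHelp
variable {α γ : Type*}

theorem zIt_prod (f finv : α → α) (g ginv : γ → γ) (j : ℤ) :
    zIt (Prod.map f g) (Prod.map finv ginv) j = Prod.map (zIt f finv j) (zIt g ginv j) := by
  unfold zIt
  split
  · exact Prod.map_iterate f g _
  · exact Prod.map_iterate finv ginv _

theorem zIt_id (j : ℤ) : zIt (id : α → α) (id : α → α) j = id := by
  unfold zIt
  split <;> exact Function.iterate_id _

theorem zIt_surjective {f finv : α → α} (hf : Function.Surjective f)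
    (hfinv : Function.Surjective finv) (j : ℤ) : Function.Surjective (zIt f finv j) := by
  unfold zIt
  split
  · exact Function.Surjective.iterate hf _
  · exact Function.Surjective.iterate hfinv _

theorem prodmap_image_prod (f : α → α) (g : γ → γ) (s : Set α) (t : Set γ) :
    Prod.map f g '' (s ×ˢ t) = (f '' s) ×ˢ (g '' t) :=
  (Set.prod_image_image_eq).symm


end ProdHelp

theorem step1 {X Y : Type*} [MeasurableSpace X] [MeasurableSpace Y]
    (T : X → X) (Tinv : X → X) (hT : Measurable T) (hTinv : Measurable Tinv)
    (hTl : Function.LeftInverse Tinv T) (hTr : Function.RightInverse Tinv T)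
    (S : Y → Y) (Sinv : Y → Y) (hS : Measurable S) (hSinv : Measurable Sinv)
    (hSl : Function.LeftInverse Sinv S) (hSr : Function.RightInverse Sinv S)
    (σ : Measure (X × Y)) [SigmaFinite σ]
    (X₀ : Set X) (Y₀ : Set Y) (hX₀ : MeasurableSet X₀) (hY₀ : MeasurableSet Y₀)
    (hpos : 0 < σ (X₀ ×ˢ Y₀)) (hfin : σ (X₀ ×ˢ Y₀) < ⊤)
    (hinv : σ.map (Prod.map T S) = σ)
    (hcons : ZConservative σ (fun j : ℤ =>
      if 0 ≤ j then (Prod.map T S)^[j.toNat] else (Prod.map Tinv Sinv)^[(-j).toNat]))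
    (herg : MeasErgodic σ (Prod.map T S))
    (hns1 : σ.map (Prod.map (id : X → X) S) ≪ σ)
    (hns2 : σ ≪ σ.map (Prod.map (id : X → X) S)) :
    σ.map (Prod.map (id : X → X) S) = σ := by
  classical
  set U : X × Y → X × Y := Prod.map T S with hUdef
  set Ui : X × Y → X × Y := Prod.map Tinv Sinv with hUidef
  set R : X × Y → X × Y := Prod.map (id : X → X) S with hRdef
  set Ri : X × Y → X × Y := Prod.map (id : X → X) Sinv with hRidef
  have hU : Measurable U := hT.prodMap hS
  have hUi : Measurable Ui := hTinv.prodMap hSinv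
  have hR : Measurable R := measurable_id.prodMap hS
  have hRi : Measurable Ri := measurable_id.prodMap hSinv
  have hUl : Function.LeftInverse Ui U := fun p => Prod.ext (hTl p.1) (hSl p.2)
  have hRl : Function.LeftInverse Ri R := fun p => Prod.ext rfl (hSl p.2)
  have hRr : Function.RightInverse Ri R := fun p => Prod.ext rfl (hSr p.2)
  -- the commutation U ∘ R = R ∘ U
  have hcomm : U ∘ R = R ∘ U := by
    rw [hUdef, hRdef, Prod.map_comp_map, Prod.map_comp_map, Function.comp_id, Function.id_comp]
  -- σ.map R is sigma-finite
  haveI hsfR : SigmaFinite (σ.map R) := by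
    refine ⟨⟨⟨fun n => Ri ⁻¹' (spanningSets σ n), fun _ => trivial, fun n => ?_, ?_⟩⟩⟩
    · rw [Measure.map_apply hR (hRi (measurableSet_spanningSets σ n)), ← Set.preimage_comp,
        hRl.comp_eq_id, Set.preimage_id]
      exact measure_spanningSets_lt_top σ n
    · rw [← Set.preimage_iUnion, iUnion_spanningSets, Set.preimage_univ]
  -- invariance of σ.map R under U
  have hm' : (σ.map R).map U = σ.map R := by
    rw [Measure.map_map hU hR, hcomm, ← Measure.map_map hR hU, hinv]
  -- ergodicity oracle
  have oracleU : ∀ B : Set (X × Y), MeasurableSet B → σ ((U ⁻¹' B) ∆ B) = 0 →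
      σ B = 0 ∨ σ Bᶜ = 0 := by
    intro B hB hBd
    have hsat := sat_symmDiff_null hU hUi hUl hinv hB hBd
    have hsm : MeasurableSet (sat U Ui B) := sat_measurableSet hU hUi hB
    have hinvsat : U ⁻¹' (sat U Ui B) = sat U Ui B := preimage_sat hUl B
    rcases herg _ hsm hinvsat with h | h
    · exact Or.inl (measure_mono_null (subset_sat U Ui B) h)
    · refine Or.inr (measure_mono_null (fun x hx => ?_) (measure_union_null h hsat))
      by_cases hxs : x ∈ sat U Ui B
      · exact Or.inr (Set.mem_symmDiff.2 (Or.inl ⟨hxs, hx⟩))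
      · exact Or.inl hxs
  obtain ⟨c, hc⟩ := proportional_of_invariant σ (σ.map R) U Ui hU hUi hUl hinv hm' hns1 oracleU
  -- c ≠ 0
  have hc0 : c ≠ 0 := by
    intro h0
    rw [h0, zero_smul] at hc
    have : σ (X₀ ×ˢ Y₀) = 0 := by
      have h1 : σ Set.univ = 0 := hns2 (by rw [hc]; rfl)
      exact measure_mono_null (Set.subset_univ _) h1
    exact absurd this (ne_of_gt hpos)
  -- c ≠ ⊤
  have hctop : c ≠ ⊤ := by
    intro htop
    have h1 : ∃ n, 0 < σ (spanningSets (σ.map R) n) := by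
      by_contra hno
      push_neg at hno
      have : σ (⋃ n, spanningSets (σ.map R) n) = 0 :=
        measure_iUnion_null fun n => nonpos_iff_eq_zero.1 (hno n)
      rw [iUnion_spanningSets] at this
      exact absurd (measure_mono_null (Set.subset_univ _) this) (ne_of_gt hpos)
    obtain ⟨n, hn⟩ := h1
    set sn := spanningSets (σ.map R) n with hsn
    have h2 : (σ.map R) sn < ⊤ := measure_spanningSets_lt_top _ n
    rw [hc] at h2
    simp only [Measure.smul_apply, smul_eq_mul, htop] at h2
    rw [ENNReal.top_mul (ne_of_gt hn)] at h2
    exact absurd h2 (lt_irrefl _)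
  -- scaling identities
  have hcR : ∀ N : Set (X × Y), MeasurableSet N → σ (R ⁻¹' N) = c * σ N := by
    intro N hN
    rw [← Measure.map_apply hR hN, hc, Measure.smul_apply, smul_eq_mul]
  have hcRi : ∀ N : Set (X × Y), MeasurableSet N → σ N = c * σ (Ri ⁻¹' N) := by
    intro N hN
    have := hcR (Ri ⁻¹' N) (hRi hN)
    rwa [← Set.preimage_comp, hRl.comp_eq_id, Set.preimage_id] at this
  have hcRin : ∀ (n : ℕ) (N : Set (X × Y)), MeasurableSet N →
      σ N = c ^ n * σ (Ri^[n] ⁻¹' N) := by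
    intro n
    induction n with
    | zero => intro N hN; simp
    | succ n ih =>
        intro N hN
        calc σ N = c ^ n * σ (Ri^[n] ⁻¹' N) := ih N hN
          _ = c ^ n * (c * σ (Ri ⁻¹' (Ri^[n] ⁻¹' N))) := by
              rw [← hcRi _ ((hRi.iterate n) hN)]
          _ = c ^ (n + 1) * σ (Ri^[n + 1] ⁻¹' N) := by
              rw [← Set.preimage_comp, ← Function.iterate_succ, ← mul_assoc, ← pow_succ]
  -- V-side scaling
  set V : X × Y → X × Y := Prod.map T (id : Y → Y) with hVdef
  set Vi : X × Y → X × Y := Prod.map Tinv (id : Y → Y) with hVidef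
  have hV : Measurable V := hT.prodMap measurable_id
  have hVi : Measurable Vi := hTinv.prodMap measurable_id
  have hVl : Function.LeftInverse Vi V := fun p => Prod.ext (hTl p.1) rfl
  have hVr : Function.RightInverse Vi V := fun p => Prod.ext (hTr p.1) rfl
  have hVR : U = V ∘ R := by
    rw [hUdef, hVdef, hRdef, Prod.map_comp_map, Function.comp_id, Function.id_comp]
  have hcV : ∀ N : Set (X × Y), MeasurableSet N → σ N = c * σ (V ⁻¹' N) := by
    intro N hN
    have h1 : σ (U ⁻¹' N) = σ N := by rw [← Measure.map_apply hU hN, hinv]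
    have h2 : U ⁻¹' N = R ⁻¹' (V ⁻¹' N) := by rw [hVR, Set.preimage_comp]
    rw [← h1, h2, hcR _ (hV hN)]
  have hcVi : ∀ N : Set (X × Y), MeasurableSet N → σ (Vi ⁻¹' N) = c * σ N := by
    intro N hN
    have := hcV (Vi ⁻¹' N) (hVi hN)
    rwa [← Set.preimage_comp, hVl.comp_eq_id, Set.preimage_id] at this
  have hcVin : ∀ (n : ℕ) (N : Set (X × Y)), MeasurableSet N →
      σ (Vi^[n] ⁻¹' N) = c ^ n * σ N := by
    intro n
    induction n with
    | zero => intro N hN; simp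
    | succ n ih =>
        intro N hN
        have h2 := hcVi (Vi^[n] ⁻¹' N) ((hVi.iterate n) hN)
        rw [← Set.preimage_comp, ← Function.iterate_succ] at h2
        rw [h2, ih N hN, ← mul_assoc, ← pow_succ']
  -- the sets B n
  set A : Set (X × Y) := X₀ ×ˢ Y₀ with hAdef
  have hAmeas : MeasurableSet A := hX₀.prod hY₀
  have hBmeas : ∀ n : ℕ, MeasurableSet (A ∩ U^[n + 1] ⁻¹' A) :=
    fun n => hAmeas.inter ((hU.iterate (n + 1)) hAmeas)
  -- subset facts
  have hsubRi : ∀ n : ℕ, Ri^[n + 1] ⁻¹' (A ∩ U^[n + 1] ⁻¹' A) ⊆ A := by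
    intro n x hx
    obtain ⟨x₁, x₂⟩ := x
    have hx' : Ri^[n + 1] (x₁, x₂) = (x₁, Sinv^[n + 1] x₂) := by
      rw [hRidef, Prod.map_iterate]
      simp [Function.iterate_id]
    rw [Set.mem_preimage, hx'] at hx
    have h1 : (x₁, Sinv^[n + 1] x₂) ∈ A := hx.1
    have h2 : U^[n + 1] (x₁, Sinv^[n + 1] x₂) ∈ A := hx.2
    rw [hUdef, Prod.map_iterate] at h2
    have h3 : Prod.map T^[n + 1] S^[n + 1] (x₁, Sinv^[n + 1] x₂)
        = (T^[n + 1] x₁, x₂) := Prod.ext rfl ((hSr.iterate (n + 1)) x₂)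
    rw [h3] at h2
    exact ⟨h1.1, h2.2⟩
  have hsubVi : ∀ n : ℕ, Vi^[n + 1] ⁻¹' (A ∩ U^[n + 1] ⁻¹' A) ⊆ A := by
    intro n x hx
    obtain ⟨x₁, x₂⟩ := x
    have hx' : Vi^[n + 1] (x₁, x₂) = (Tinv^[n + 1] x₁, x₂) := by
      rw [hVidef, Prod.map_iterate]
      simp [Function.iterate_id]
    rw [Set.mem_preimage, hx'] at hx
    have h1 : (Tinv^[n + 1] x₁, x₂) ∈ A := hx.1
    have h2 : U^[n + 1] (Tinv^[n + 1] x₁, x₂) ∈ A := hx.2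
    rw [hUdef, Prod.map_iterate] at h2
    have h3 : Prod.map T^[n + 1] S^[n + 1] (Tinv^[n + 1] x₁, x₂)
        = (x₁, S^[n + 1] x₂) := Prod.ext ((hTr.iterate (n + 1)) x₁) rfl
    rw [h3] at h2
    exact ⟨h2.1, h1.2⟩
  -- c = 1
  have hc1 : c = 1 := by
    rcases lt_trichotomy c 1 with hlt | heq | hgt
    · exfalso
      have hbound : ∀ n : ℕ, σ (A ∩ U^[n + 1] ⁻¹' A) ≤ c ^ (n + 1) * σ A := by
        intro n
        rw [hcRin (n + 1) _ (hBmeas n)]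
        exact mul_le_mul_right (measure_mono (hsubRi n)) _
      have hsum : ∑' n : ℕ, σ (A ∩ U^[n + 1] ⁻¹' A) ≠ ⊤ := by
        refine ne_top_of_le_ne_top ?_ (ENNReal.tsum_le_tsum hbound)
        rw [ENNReal.tsum_mul_right]
        refine ENNReal.mul_ne_top ?_ (ne_of_lt hfin)
        have hle : ∑' n : ℕ, c ^ (n + 1) ≤ ∑' n : ℕ, c ^ n :=
          ENNReal.tsum_le_tsum fun n => pow_le_pow_of_le_one zero_le hlt.le (by omega)
        rw [ENNReal.tsum_geometric] at hle
        refine ne_top_of_le_ne_top (ENNReal.inv_ne_top.2 ?_) hle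
        rw [Ne, tsub_eq_zero_iff_le]
        exact not_le.2 hlt
      exact absurd (null_of_summable_returns hU hUi hUl
        (fun p => Prod.ext (hTr p.1) (hSr p.2)) hinv hcons hAmeas hsum) (ne_of_gt hpos)
    · exact heq
    · exfalso
      have hcpow0 : ∀ n : ℕ, c ^ (n + 1) ≠ 0 := fun n => pow_ne_zero _ hc0
      have hcpowt : ∀ n : ℕ, c ^ (n + 1) ≠ ⊤ := fun n => ENNReal.pow_ne_top hctop
      have hbound : ∀ n : ℕ, σ (A ∩ U^[n + 1] ⁻¹' A) ≤ (c⁻¹) ^ (n + 1) * σ A := by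
        intro n
        have h1 : c ^ (n + 1) * σ (A ∩ U^[n + 1] ⁻¹' A) ≤ σ A := by
          rw [← hcVin (n + 1) _ (hBmeas n)]
          exact measure_mono (hsubVi n)
        calc σ (A ∩ U^[n + 1] ⁻¹' A)
            = (c ^ (n + 1))⁻¹ * (c ^ (n + 1) * σ (A ∩ U^[n + 1] ⁻¹' A)) := by
              rw [← mul_assoc, ENNReal.inv_mul_cancel (hcpow0 n) (hcpowt n), one_mul]
          _ ≤ (c ^ (n + 1))⁻¹ * σ A := mul_le_mul_right h1 _
          _ = (c⁻¹) ^ (n + 1) * σ A := by rw [ENNReal.inv_pow]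
      have hsum : ∑' n : ℕ, σ (A ∩ U^[n + 1] ⁻¹' A) ≠ ⊤ := by
        refine ne_top_of_le_ne_top ?_ (ENNReal.tsum_le_tsum hbound)
        have hinvlt : c⁻¹ < 1 := by
          rw [ENNReal.inv_lt_one]
          exact hgt
        rw [ENNReal.tsum_mul_right]
        refine ENNReal.mul_ne_top ?_ (ne_of_lt hfin)
        have hle : ∑' n : ℕ, (c⁻¹) ^ (n + 1) ≤ ∑' n : ℕ, (c⁻¹) ^ n :=
          ENNReal.tsum_le_tsum fun n => pow_le_pow_of_le_one zero_le hinvlt.le (by omega)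
        rw [ENNReal.tsum_geometric] at hle
        refine ne_top_of_le_ne_top (ENNReal.inv_ne_top.2 ?_) hle
        rw [Ne, tsub_eq_zero_iff_le]
        exact not_le.2 hinvlt
      exact absurd (null_of_summable_returns hU hUi hUl
        (fun p => Prod.ext (hTr p.1) (hSr p.2)) hinv hcons hAmeas hsum) (ne_of_gt hpos)
  rw [hc1, one_smul] at hc
  exact hc


set_option maxHeartbeats 1000000 in
theorem step2 {X Y : Type*} [MeasurableSpace X] [MeasurableSpace Y]
    (T : X → X) (Tinv : X → X) (hT : Measurable T) (hTinv : Measurable Tinv)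
    (hTl : Function.LeftInverse Tinv T) (hTr : Function.RightInverse Tinv T)
    (S : Y → Y) (Sinv : Y → Y) (hS : Measurable S) (hSinv : Measurable Sinv)
    (hSl : Function.LeftInverse Sinv S) (hSr : Function.RightInverse Sinv S)
    (σ : Measure (X × Y)) [SigmaFinite σ]
    (X₀ : Set X) (Y₀ : Set Y) (hX₀ : MeasurableSet X₀) (hY₀ : MeasurableSet Y₀)
    (hpos : 0 < σ (X₀ ×ˢ Y₀)) (hfin : σ (X₀ ×ˢ Y₀) < ⊤)
    (hinv : σ.map (Prod.map T S) = σ)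
    (hcons : ZConservative σ (fun j : ℤ =>
      if 0 ≤ j then (Prod.map T S)^[j.toNat] else (Prod.map Tinv Sinv)^[(-j).toNat]))
    (herg : MeasErgodic σ (Prod.map T S))
    (hRinv : σ.map (Prod.map (id : X → X) S) = σ) :
    ∃ (μ : Measure X) (ν : Measure Y),
      SigmaFinite μ ∧ SigmaFinite ν ∧
      μ.map T = μ ∧ ν.map S = ν ∧ σ = μ.prod ν ∧
      ZConservative μ (fun j : ℤ => if 0 ≤ j then T^[j.toNat] else Tinv^[(-j).toNat]) ∧
      MeasErgodic μ T ∧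
      ZConservative ν (fun j : ℤ => if 0 ≤ j then S^[j.toNat] else Sinv^[(-j).toNat]) ∧
      MeasErgodic ν S := by
  classical
  set U : X × Y → X × Y := Prod.map T S with hUdef
  set Ui : X × Y → X × Y := Prod.map Tinv Sinv with hUidef
  set R : X × Y → X × Y := Prod.map (id : X → X) S with hRdef
  set Ri : X × Y → X × Y := Prod.map (id : X → X) Sinv with hRidef
  set V : X × Y → X × Y := Prod.map T (id : Y → Y) with hVdef
  set Vi : X × Y → X × Y := Prod.map Tinv (id : Y → Y) with hVidef
  have hU : Measurable U := hT.prodMap hS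
  have hUi : Measurable Ui := hTinv.prodMap hSinv
  have hR : Measurable R := measurable_id.prodMap hS
  have hRi : Measurable Ri := measurable_id.prodMap hSinv
  have hV : Measurable V := hT.prodMap measurable_id
  have hVi : Measurable Vi := hTinv.prodMap measurable_id
  have hUl : Function.LeftInverse Ui U := fun p => Prod.ext (hTl p.1) (hSl p.2)
  have hUr : Function.RightInverse Ui U := fun p => Prod.ext (hTr p.1) (hSr p.2)
  have hRl : Function.LeftInverse Ri R := fun p => Prod.ext rfl (hSl p.2)
  have hRr : Function.RightInverse Ri R := fun p => Prod.ext rfl (hSr p.2)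
  have hVl : Function.LeftInverse Vi V := fun p => Prod.ext (hTl p.1) rfl
  have hVr : Function.RightInverse Vi V := fun p => Prod.ext (hTr p.1) rfl
  -- preimage invariance identities
  have hUpre : ∀ N : Set (X × Y), MeasurableSet N → σ (U ⁻¹' N) = σ N := by
    intro N hN; rw [← Measure.map_apply hU hN, hinv]
  have hRpre : ∀ N : Set (X × Y), MeasurableSet N → σ (R ⁻¹' N) = σ N := by
    intro N hN; rw [← Measure.map_apply hR hN, hRinv]
  have hRipre : ∀ N : Set (X × Y), MeasurableSet N → σ (Ri ⁻¹' N) = σ N := by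
    intro N hN
    have h1 := hRpre (Ri ⁻¹' N) (hRi hN)
    rw [← Set.preimage_comp, hRl.comp_eq_id, Set.preimage_id] at h1
    exact h1.symm
  have hVpre : ∀ N : Set (X × Y), MeasurableSet N → σ (V ⁻¹' N) = σ N := by
    intro N hN
    have h1 : V = U ∘ Ri := by
      rw [hUdef, hRidef, hVdef, Prod.map_comp_map, Function.comp_id]
      have h2 : S ∘ Sinv = id := funext fun y => hSr y
      rw [h2]
    rw [h1, Set.preimage_comp, hRipre _ (hU hN), hUpre _ hN]
  have hVmap : σ.map V = σ := by
    refine Measure.ext fun N hN => ?_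
    rw [Measure.map_apply hV hN, hVpre _ hN]
  -- basic rectangle measures
  set a : ℝ≥0∞ := σ (X₀ ×ˢ Y₀) with hadef
  have ha0 : a ≠ 0 := ne_of_gt hpos
  have haT : a ≠ ⊤ := ne_of_lt hfin
  -- L2 : Y-side null propagation
  have hL2 : ∀ F : Set Y, MeasurableSet F → σ (X₀ ×ˢ F) = 0 → σ (Set.univ ×ˢ F) = 0 := by
    intro F hF h0
    set sF := sat S Sinv F with hsF
    have hsFmeas : MeasurableSet sF := sat_measurableSet hS hSinv hF
    have hnullj : ∀ j : ℤ, σ (X₀ ×ˢ (zIt S Sinv j ⁻¹' F)) = 0 := by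
      intro j
      have h1 : X₀ ×ˢ (zIt S Sinv j ⁻¹' F) = zIt R Ri j ⁻¹' (X₀ ×ˢ F) := by
        rw [hRdef, hRidef, zIt_prod, Set.preimage_prod_map_prod, zIt_id, Set.preimage_id]
      rw [h1, meas_zIt_preimage hR hRi hRl hRinv j (hX₀.prod hF)]
      exact h0
    have hsFnull : σ (X₀ ×ˢ sF) = 0 := by
      have h1 : X₀ ×ˢ sF = ⋃ j : ℤ, X₀ ×ˢ (zIt S Sinv j ⁻¹' F) := by
        rw [hsF, sat, Set.prod_iUnion]
      rw [h1]
      exact measure_iUnion_null hnullj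
    have hUinv : U ⁻¹' (Set.univ ×ˢ sF) = Set.univ ×ˢ sF := by
      rw [hUdef, Set.preimage_prod_map_prod, Set.preimage_univ, preimage_sat hSl]
    rcases herg _ (MeasurableSet.univ.prod hsFmeas) hUinv with h | h
    · exact measure_mono_null (Set.prod_mono_right (subset_sat S Sinv F)) h
    · exfalso
      have hcompl : (Set.univ ×ˢ sF)ᶜ = (Set.univ : Set X) ×ˢ sFᶜ := by
        ext z
        simp [Set.mem_prod]
      rw [hcompl] at h
      have hsub : X₀ ×ˢ Y₀ ⊆ (X₀ ×ˢ sF) ∪ (Set.univ ×ˢ sFᶜ) := by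
        rintro ⟨x, y⟩ ⟨hx, hy⟩
        by_cases hys : y ∈ sF
        · exact Or.inl ⟨hx, hys⟩
        · exact Or.inr ⟨trivial, hys⟩
      exact ha0 (measure_mono_null hsub (measure_union_null hsFnull h))
  -- finite surrogate measures
  set P : Measure (X × Y) := σ.toFinite with hPdef
  have hPnull : ∀ N : Set (X × Y), P N = 0 ↔ σ N = 0 := fun N =>
    MeasureTheory.toFinite_apply_eq_zero_iff
  set lamX : Measure X := P.map Prod.fst with hlamXdef
  set lamY : Measure Y := P.map Prod.snd with hlamYdef
  haveI : IsFiniteMeasure P := by rw [hPdef]; infer_instance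
  haveI : IsFiniteMeasure lamX := by rw [hlamXdef]; infer_instance
  haveI : IsFiniteMeasure lamY := by rw [hlamYdef]; infer_instance
  have hlamX : ∀ E : Set X, MeasurableSet E → (lamX E = 0 ↔ σ (E ×ˢ Set.univ) = 0) := by
    intro E hE
    rw [hlamXdef, Measure.map_apply measurable_fst hE, ← Set.prod_univ]
    exact hPnull _
  have hlamY : ∀ F : Set Y, MeasurableSet F → (lamY F = 0 ↔ σ (Set.univ ×ˢ F) = 0) := by
    intro F hF
    rw [hlamYdef, Measure.map_apply measurable_snd hF, ← Set.univ_prod]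
    exact hPnull _
  -- marginal-type measures
  set mub : Measure X := (σ.restrict (Set.univ ×ˢ Y₀)).map Prod.fst with hmubdef
  have hmub : ∀ E : Set X, MeasurableSet E → mub E = σ (E ×ˢ Y₀) := by
    intro E hE
    rw [hmubdef, Measure.map_apply measurable_fst hE,
      Measure.restrict_apply (measurable_fst hE), ← Set.prod_univ, Set.prod_inter_prod,
      Set.inter_univ, Set.univ_inter]
  set nub : Measure Y := (σ.restrict (X₀ ×ˢ Set.univ)).map Prod.snd with hnubdef
  have hnub : ∀ F : Set Y, MeasurableSet F → nub F = σ (X₀ ×ˢ F) := by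
    intro F hF
    rw [hnubdef, Measure.map_apply measurable_snd hF,
      Measure.restrict_apply (measurable_snd hF), ← Set.univ_prod, Set.prod_inter_prod,
      Set.inter_univ, Set.univ_inter]
  -- X-side carrier
  set pX : Set X → Prop := fun E => ∃ g : ℕ → Set X,
    (∀ k, MeasurableSet (g k) ∧ σ (g k ×ˢ Y₀) < ⊤) ∧ E ⊆ ⋃ k, g k with hpXdef
  have hpX0 : pX ∅ := ⟨fun _ => ∅, fun _ => ⟨MeasurableSet.empty, by simp⟩, by simp⟩
  have hpXU : ∀ g : ℕ → Set X, (∀ n, MeasurableSet (g n) ∧ pX (g n)) → pX (⋃ n, g n) := by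
    intro g hg
    choose gc hgc1 hgc2 using fun n => (hg n).2
    refine ⟨fun m => gc (Nat.unpair m).1 (Nat.unpair m).2, fun m => hgc1 _ _, ?_⟩
    intro x hx
    obtain ⟨n, hn⟩ := Set.mem_iUnion.1 hx
    obtain ⟨k, hk⟩ := Set.mem_iUnion.1 (hgc2 n hn)
    exact Set.mem_iUnion.2 ⟨Nat.pair n k, by rw [Nat.unpair_pair]; exact hk⟩
  obtain ⟨F₀, hF₀meas, hF₀p, hF₀max⟩ := exists_maximal_carrier lamX pX hpX0 hpXU
  set Ft : Set X := sat T Tinv F₀ with hFtdef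
  have hFtmeas : MeasurableSet Ft := sat_measurableSet hT hTinv hF₀meas
  have hFtpre : T ⁻¹' Ft = Ft := preimage_sat hTl F₀
  -- invariance of rectangle measures under zIt of T
  have hVrect : ∀ (j : ℤ) (E : Set X) (F : Set Y), MeasurableSet E → MeasurableSet F →
      σ ((zIt T Tinv j ⁻¹' E) ×ˢ F) = σ (E ×ˢ F) := by
    intro j E F hE hF
    have h1 : (zIt T Tinv j ⁻¹' E) ×ˢ F = zIt V Vi j ⁻¹' (E ×ˢ F) := by
      rw [hVdef, hVidef, zIt_prod, Set.preimage_prod_map_prod, zIt_id, Set.preimage_id]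
    rw [h1, meas_zIt_preimage hV hVi hVl hVmap j (hE.prod hF)]
  have hRrect : ∀ (j : ℤ) (E : Set X) (F : Set Y), MeasurableSet E → MeasurableSet F →
      σ (E ×ˢ (zIt S Sinv j ⁻¹' F)) = σ (E ×ˢ F) := by
    intro j E F hE hF
    have h1 : E ×ˢ (zIt S Sinv j ⁻¹' F) = zIt R Ri j ⁻¹' (E ×ˢ F) := by
      rw [hRdef, hRidef, zIt_prod, Set.preimage_prod_map_prod, zIt_id, Set.preimage_id]
    rw [h1, meas_zIt_preimage hR hRi hRl hRinv j (hE.prod hF)]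
  have hFtp : pX Ft := by
    obtain ⟨g, hg1, hg2⟩ := hF₀p
    set e : ℕ → ℤ × ℕ := fun n => (Denumerable.eqv (ℤ × ℕ)).symm n with hedef
    refine ⟨fun n => zIt T Tinv (e n).1 ⁻¹' g (e n).2, fun n =>
      ⟨zIt_measurable hT hTinv _ (hg1 _).1, ?_⟩, ?_⟩
    · rw [hVrect _ _ _ (hg1 _).1 hY₀]
      exact (hg1 _).2
    · intro x hx
      obtain ⟨j, hj⟩ := Set.mem_iUnion.1 hx
      obtain ⟨k, hk⟩ := Set.mem_iUnion.1 (hg2 hj)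
      refine Set.mem_iUnion.2 ⟨Denumerable.eqv (ℤ × ℕ) (j, k), ?_⟩
      show x ∈ zIt T Tinv (e _).1 ⁻¹' g (e _).2
      rw [hedef]
      simp only [Equiv.symm_apply_apply]
      exact hk
  have hpXX₀ : pX X₀ := ⟨fun _ => X₀, fun _ => ⟨hX₀, hfin⟩, fun x hx => Set.mem_iUnion.2 ⟨0, hx⟩⟩
  have hFtF₀ : σ ((Ft \ F₀) ×ˢ Set.univ) = 0 :=
    (hlamX _ (hFtmeas.diff hF₀meas)).1 (hF₀max Ft hFtmeas hFtp)
  have hFtc : σ (Ftᶜ ×ˢ Set.univ) = 0 := by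
    have hUinv : U ⁻¹' (Ft ×ˢ Set.univ) = Ft ×ˢ Set.univ := by
      rw [hUdef, Set.preimage_prod_map_prod, Set.preimage_univ, hFtpre]
    rcases herg _ (hFtmeas.prod MeasurableSet.univ) hUinv with h | h
    · exfalso
      have hX₀F₀ : σ ((X₀ \ F₀) ×ˢ Set.univ) = 0 :=
        (hlamX _ (hX₀.diff hF₀meas)).1 (hF₀max X₀ hX₀ hpXX₀)
      have hsub : X₀ ×ˢ Y₀ ⊆ (Ft ×ˢ Set.univ) ∪ ((X₀ \ F₀) ×ˢ Set.univ) := by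
        rintro ⟨x, y⟩ ⟨hx, hy⟩
        by_cases hxF : x ∈ F₀
        · exact Or.inl ⟨subset_sat T Tinv F₀ hxF, trivial⟩
        · exact Or.inr ⟨⟨hx, hxF⟩, trivial⟩
      exact ha0 (measure_mono_null hsub (measure_union_null h hX₀F₀))
    · have hcompl : (Ft ×ˢ (Set.univ : Set Y))ᶜ = Ftᶜ ×ˢ (Set.univ : Set Y) := by
        ext z
        simp [Set.mem_prod]
      rw [hcompl] at h
      exact h
  -- pieces of Ft
  obtain ⟨eg0, heg0, heg0sub⟩ := hFtp
  set ex : ℕ → Set X := fun n => eg0 n ∩ Ft with hexdef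
  have hexmeas : ∀ n, MeasurableSet (ex n) := fun n => (heg0 n).1.inter hFtmeas
  have hexfin : ∀ n, σ (ex n ×ˢ Y₀) < ⊤ := fun n =>
    lt_of_le_of_lt (measure_mono (Set.prod_mono_left Set.inter_subset_left)) (heg0 n).2
  have hexunion : ⋃ n, ex n = Ft := by
    apply Set.Subset.antisymm
    · exact Set.iUnion_subset fun n => Set.inter_subset_right
    · intro x hx
      obtain ⟨k, hk⟩ := Set.mem_iUnion.1 (heg0sub hx)
      exact Set.mem_iUnion.2 ⟨k, hk, hx⟩
  -- Y-side carrier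
  set pY : Set Y → Prop := fun F => ∃ g : ℕ → Set Y,
    (∀ k, MeasurableSet (g k) ∧ σ (X₀ ×ˢ g k) < ⊤ ∧ ∀ n, σ (ex n ×ˢ g k) < ⊤) ∧
      F ⊆ ⋃ k, g k with hpYdef
  have hpY0 : pY ∅ := ⟨fun _ => ∅, fun _ => ⟨MeasurableSet.empty, by simp, by simp⟩, by simp⟩
  have hpYU : ∀ g : ℕ → Set Y, (∀ n, MeasurableSet (g n) ∧ pY (g n)) → pY (⋃ n, g n) := by
    intro g hg
    choose gc hgc1 hgc2 using fun n => (hg n).2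
    refine ⟨fun m => gc (Nat.unpair m).1 (Nat.unpair m).2, fun m => hgc1 _ _, ?_⟩
    intro x hx
    obtain ⟨n, hn⟩ := Set.mem_iUnion.1 hx
    obtain ⟨k, hk⟩ := Set.mem_iUnion.1 (hgc2 n hn)
    exact Set.mem_iUnion.2 ⟨Nat.pair n k, by rw [Nat.unpair_pair]; exact hk⟩
  have hpYY₀ : pY Y₀ := ⟨fun _ => Y₀, fun _ => ⟨hY₀, hfin, fun n => hexfin n⟩,
    fun x hx => Set.mem_iUnion.2 ⟨0, hx⟩⟩
  obtain ⟨H₀, hH₀meas, hH₀p, hH₀max⟩ := exists_maximal_carrier lamY pY hpY0 hpYU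
  set Gt : Set Y := sat S Sinv H₀ with hGtdef
  have hGtmeas : MeasurableSet Gt := sat_measurableSet hS hSinv hH₀meas
  have hGtpre : S ⁻¹' Gt = Gt := preimage_sat hSl H₀
  have hGtp : pY Gt := by
    obtain ⟨g, hg1, hg2⟩ := hH₀p
    set e : ℕ → ℤ × ℕ := fun n => (Denumerable.eqv (ℤ × ℕ)).symm n with hedef
    refine ⟨fun n => zIt S Sinv (e n).1 ⁻¹' g (e n).2, fun n =>
      ⟨zIt_measurable hS hSinv _ (hg1 _).1, ?_, fun m => ?_⟩, ?_⟩
    · rw [hRrect _ _ _ hX₀ (hg1 _).1]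
      exact (hg1 _).2.1
    · rw [hRrect _ _ _ (hexmeas m) (hg1 _).1]
      exact (hg1 _).2.2 m
    · intro y hy
      obtain ⟨j, hj⟩ := Set.mem_iUnion.1 hy
      obtain ⟨k, hk⟩ := Set.mem_iUnion.1 (hg2 hj)
      refine Set.mem_iUnion.2 ⟨Denumerable.eqv (ℤ × ℕ) (j, k), ?_⟩
      show y ∈ zIt S Sinv (e _).1 ⁻¹' g (e _).2
      rw [hedef]
      simp only [Equiv.symm_apply_apply]
      exact hk
  have hGtc : σ (Set.univ ×ˢ Gtᶜ) = 0 := by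
    have hUinv : U ⁻¹' (Set.univ ×ˢ Gt) = Set.univ ×ˢ Gt := by
      rw [hUdef, Set.preimage_prod_map_prod, Set.preimage_univ, hGtpre]
    rcases herg _ (MeasurableSet.univ.prod hGtmeas) hUinv with h | h
    · exfalso
      have hY₀H₀ : σ (Set.univ ×ˢ (Y₀ \ H₀)) = 0 :=
        (hlamY _ (hY₀.diff hH₀meas)).1 (hH₀max Y₀ hY₀ hpYY₀)
      have hsub : X₀ ×ˢ Y₀ ⊆ (Set.univ ×ˢ Gt) ∪ (Set.univ ×ˢ (Y₀ \ H₀)) := by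
        rintro ⟨x, y⟩ ⟨hx, hy⟩
        by_cases hyH : y ∈ H₀
        · exact Or.inl ⟨trivial, subset_sat S Sinv H₀ hyH⟩
        · exact Or.inr ⟨trivial, hy, hyH⟩
      exact ha0 (measure_mono_null hsub (measure_union_null h hY₀H₀))
    · have hcompl : ((Set.univ : Set X) ×ˢ Gt)ᶜ = (Set.univ : Set X) ×ˢ Gtᶜ := by
        ext z
        simp [Set.mem_prod]
      rw [hcompl] at h
      exact h
  -- splitting helpers
  have hsplitY : ∀ (E : Set X) (F : Set Y), σ (E ×ˢ (F ∩ Gt)) = σ (E ×ˢ F) := by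
    intro E F
    apply le_antisymm (measure_mono (Set.prod_mono_right Set.inter_subset_left))
    have hsub : E ×ˢ F ⊆ (E ×ˢ (F ∩ Gt)) ∪ ((Set.univ : Set X) ×ˢ Gtᶜ) := by
      rintro ⟨x, y⟩ ⟨hx, hy⟩
      by_cases hyG : y ∈ Gt
      · exact Or.inl ⟨hx, hy, hyG⟩
      · exact Or.inr ⟨trivial, hyG⟩
    calc σ (E ×ˢ F) ≤ σ ((E ×ˢ (F ∩ Gt)) ∪ ((Set.univ : Set X) ×ˢ Gtᶜ)) := measure_mono hsub
      _ ≤ σ (E ×ˢ (F ∩ Gt)) + σ ((Set.univ : Set X) ×ˢ Gtᶜ) := measure_union_le _ _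
      _ = σ (E ×ˢ (F ∩ Gt)) := by rw [hGtc, add_zero]
  have hsplitX : ∀ (E : Set X) (F : Set Y), σ ((E ∩ Ft) ×ˢ F) = σ (E ×ˢ F) := by
    intro E F
    apply le_antisymm (measure_mono (Set.prod_mono_left Set.inter_subset_left))
    have hsub : E ×ˢ F ⊆ ((E ∩ Ft) ×ˢ F) ∪ (Ftᶜ ×ˢ (Set.univ : Set Y)) := by
      rintro ⟨x, y⟩ ⟨hx, hy⟩
      by_cases hxF : x ∈ Ft
      · exact Or.inl ⟨⟨hx, hxF⟩, hy⟩
      · exact Or.inr ⟨hxF, trivial⟩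
    calc σ (E ×ˢ F) ≤ σ (((E ∩ Ft) ×ˢ F) ∪ (Ftᶜ ×ˢ (Set.univ : Set Y))) := measure_mono hsub
      _ ≤ σ ((E ∩ Ft) ×ˢ F) + σ (Ftᶜ ×ˢ (Set.univ : Set Y)) := measure_union_le _ _
      _ = σ ((E ∩ Ft) ×ˢ F) := by rw [hFtc, add_zero]
  -- the measure ν
  obtain ⟨hy, hhy1, hhy2⟩ := hGtp
  set ν : Measure Y := nub.restrict Gt with hνdef
  have hν : ∀ F : Set Y, MeasurableSet F → ν F = σ (X₀ ×ˢ (F ∩ Gt)) := by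
    intro F hF
    rw [hνdef, Measure.restrict_apply hF, hnub _ (hF.inter hGtmeas)]
  haveI hνsf : SigmaFinite ν := by
    refine ⟨⟨⟨fun n => if n = 0 then Gtᶜ else hy (n - 1) ∪ Gtᶜ, fun _ => trivial,
      fun n => ?_, ?_⟩⟩⟩
    · skip
      by_cases h : n = 0
      · rw [if_pos h, hν _ hGtmeas.compl]
        simp
      · rw [if_neg h, hν _ ((hhy1 (n - 1)).1.union hGtmeas.compl)]
        refine lt_of_le_of_lt (measure_mono ?_) (hhy1 (n - 1)).2.1
        rintro ⟨x, y⟩ ⟨hx, hy', hyG⟩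
        rcases hy' with hy' | hy'
        · exact ⟨hx, hy'⟩
        · exact absurd hyG hy'
    · apply Set.eq_univ_of_forall
      intro y
      by_cases hyG : y ∈ Gt
      · obtain ⟨k, hk⟩ := Set.mem_iUnion.1 (hhy2 hyG)
        exact Set.mem_iUnion.2 ⟨k + 1, by simp [hk]⟩
      · exact Set.mem_iUnion.2 ⟨0, by simp [hyG]⟩
  have hνS : ν.map S = ν := by
    refine Measure.ext fun F hF => ?_
    rw [Measure.map_apply hS hF, hν _ (hS hF), hν _ hF]
    have h1 : S ⁻¹' F ∩ Gt = S ⁻¹' (F ∩ Gt) := by rw [Set.preimage_inter, hGtpre]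
    rw [h1]
    have h2 : X₀ ×ˢ (S ⁻¹' (F ∩ Gt)) = R ⁻¹' (X₀ ×ˢ (F ∩ Gt)) := by
      rw [hRdef, Set.preimage_prod_map_prod, Set.preimage_id]
    rw [h2, hRpre _ (hX₀.prod (hF.inter hGtmeas))]
  have hνY₀ : ν Y₀ = a := by
    rw [hν _ hY₀, hsplitY X₀ Y₀]
  -- the ergodic oracle on the Y side
  have oracleY : ∀ B : Set Y, MeasurableSet B → ν ((S ⁻¹' B) ∆ B) = 0 →
      ν B = 0 ∨ ν Bᶜ = 0 := by
    intro B hB hd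
    set B' : Set Y := B ∩ Gt with hB'def
    have hB'meas : MeasurableSet B' := hB.inter hGtmeas
    have hd' : ν ((S ⁻¹' B') ∆ B') = 0 := by
      refine measure_mono_null (fun y hy => ?_) hd
      rcases Set.mem_symmDiff.1 hy with ⟨h1, h2⟩ | ⟨h1, h2⟩
      · have hyS : S y ∈ B := h1.1
        have hyG : y ∈ Gt := by rw [← hGtpre]; exact h1.2
        have hyB : y ∉ B := fun hb => h2 ⟨hb, hyG⟩
        exact Set.mem_symmDiff.2 (Or.inl ⟨hyS, hyB⟩)
      · have hyB : y ∈ B := h1.1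
        have hyG : y ∈ Gt := h1.2
        rw [← hGtpre] at hyG
        have hyS : y ∉ S ⁻¹' B := fun hs => h2 ⟨hs, hyG⟩
        exact Set.mem_symmDiff.2 (Or.inr ⟨hyB, hyS⟩)
    set Bt : Set Y := sat S Sinv B' with hBtdef
    have hBtmeas : MeasurableSet Bt := sat_measurableSet hS hSinv hB'meas
    have hBtd : ν (Bt ∆ B') = 0 := sat_symmDiff_null hS hSinv hSl hνS hB'meas hd'
    have hle : ∀ G : Set Y, MeasurableSet G → ν G ≤ σ (Set.univ ×ˢ G) := by
      intro G hG
      rw [hν _ hG]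
      refine measure_mono ?_
      rintro ⟨x, y⟩ ⟨hx, hy, _⟩
      exact ⟨trivial, hy⟩
    have hUinv : U ⁻¹' (Set.univ ×ˢ Bt) = Set.univ ×ˢ Bt := by
      rw [hUdef, Set.preimage_prod_map_prod, Set.preimage_univ, preimage_sat hSl]
    have hBB' : ν B = ν B' := by
      rw [hν _ hB, hν _ hB'meas, hB'def, Set.inter_assoc, Set.inter_self]
    rcases herg _ (MeasurableSet.univ.prod hBtmeas) hUinv with h | h
    · left
      rw [hBB']
      refine le_antisymm (le_trans (measure_mono (subset_sat S Sinv B')) ?_) zero_le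
      rw [← h]
      exact hle _ hBtmeas
    · right
      refine le_antisymm ?_ zero_le
      have hcompl : ((Set.univ : Set X) ×ˢ Bt)ᶜ = (Set.univ : Set X) ×ˢ Btᶜ := by
        ext z
        simp [Set.mem_prod]
      rw [hcompl] at h
      have hsub : Bᶜ ⊆ Btᶜ ∪ (Bt \ B') := by
        intro y hyB
        by_cases hyBt : y ∈ Bt
        · exact Or.inr ⟨hyBt, fun hb => hyB hb.1⟩
        · exact Or.inl hyBt
      calc ν Bᶜ ≤ ν (Btᶜ ∪ (Bt \ B')) := measure_mono hsub
        _ ≤ ν Btᶜ + ν (Bt \ B') := measure_union_le _ _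
        _ ≤ σ (Set.univ ×ˢ Btᶜ) + ν (Bt ∆ B') := by
            refine add_le_add (hle _ hBtmeas.compl) (measure_mono ?_)
            intro y hy
            exact Set.mem_symmDiff.2 (Or.inl ⟨hy.1, hy.2⟩)
        _ = 0 := by rw [h, hBtd, add_zero]
  -- proportionality for small sets E
  have keyE : ∀ E : Set X, MeasurableSet E → σ (E ×ˢ Y₀) < ⊤ → (∀ k, σ (E ×ˢ hy k) < ⊤) →
      ∀ F : Set Y, MeasurableSet F → a * σ (E ×ˢ F) = σ (E ×ˢ Y₀) * ν F := by
    intro E hE hEY₀ hEhy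
    set κ : Measure Y := ((σ.restrict (E ×ˢ Set.univ)).map Prod.snd).restrict Gt with hκdef
    have hκap : ∀ F : Set Y, MeasurableSet F → κ F = σ (E ×ˢ (F ∩ Gt)) := by
      intro F hF
      rw [hκdef, Measure.restrict_apply hF,
        Measure.map_apply measurable_snd (hF.inter hGtmeas),
        Measure.restrict_apply (measurable_snd (hF.inter hGtmeas)), ← Set.univ_prod,
        Set.prod_inter_prod, Set.univ_inter, Set.inter_univ]
    haveI hκsf : SigmaFinite κ := by
      refine ⟨⟨⟨fun n => if n = 0 then Gtᶜ else hy (n - 1) ∪ Gtᶜ, fun _ => trivial,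
        fun n => ?_, ?_⟩⟩⟩
      · skip
        by_cases h : n = 0
        · rw [if_pos h, hκap _ hGtmeas.compl]
          simp
        · rw [if_neg h, hκap _ (((hhy1 (n - 1)).1.union hGtmeas.compl))]
          refine lt_of_le_of_lt (measure_mono ?_) (hEhy (n - 1))
          rintro ⟨x, y⟩ ⟨hx, hy', hyG⟩
          rcases hy' with hy' | hy'
          · exact ⟨hx, hy'⟩
          · exact absurd hyG hy'
      · apply Set.eq_univ_of_forall
        intro y
        by_cases hyG : y ∈ Gt
        · obtain ⟨k, hk⟩ := Set.mem_iUnion.1 (hhy2 hyG)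
          exact Set.mem_iUnion.2 ⟨k + 1, by simp [hk]⟩
        · exact Set.mem_iUnion.2 ⟨0, by simp [hyG]⟩
    have hκS : κ.map S = κ := by
      refine Measure.ext fun F hF => ?_
      rw [Measure.map_apply hS hF, hκap _ (hS hF), hκap _ hF]
      have h1 : S ⁻¹' F ∩ Gt = S ⁻¹' (F ∩ Gt) := by rw [Set.preimage_inter, hGtpre]
      rw [h1]
      have h2 : E ×ˢ (S ⁻¹' (F ∩ Gt)) = R ⁻¹' (E ×ˢ (F ∩ Gt)) := by
        rw [hRdef, Set.preimage_prod_map_prod, Set.preimage_id]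
      rw [h2, hRpre _ (hE.prod (hF.inter hGtmeas))]
    have hκac : κ ≪ ν := by
      refine Measure.AbsolutelyContinuous.mk fun F hF hF0 => ?_
      rw [hν _ hF] at hF0
      have h1 : σ (Set.univ ×ˢ (F ∩ Gt)) = 0 := hL2 _ (hF.inter hGtmeas) hF0
      rw [hκap _ hF]
      refine measure_mono_null ?_ h1
      rintro ⟨x, y⟩ ⟨hx, hy⟩
      exact ⟨trivial, hy⟩
    obtain ⟨c, hcν⟩ := proportional_of_invariant ν κ S Sinv hS hSinv hSl hνS hκS hκac oracleY
    have hcY₀ : σ (E ×ˢ Y₀) = c * a := by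
      have h1 : κ Y₀ = σ (E ×ˢ Y₀) := by rw [hκap _ hY₀, hsplitY]
      rw [← h1, hcν, Measure.smul_apply, smul_eq_mul, hνY₀]
    intro F hF
    have h2 : σ (E ×ˢ F) = c * ν F := by
      rw [← hsplitY E F, ← hκap _ hF, hcν, Measure.smul_apply, smul_eq_mul]
    rw [h2, hcY₀]
    calc a * (c * ν F) = c * a * ν F := by ring
      _ = c * a * ν F := rfl
  -- global product formula
  set μ₀ : Measure X := mub.restrict Ft with hμ₀def
  have hμ₀ap : ∀ E : Set X, MeasurableSet E → μ₀ E = σ ((E ∩ Ft) ×ˢ Y₀) := by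
    intro E hE
    rw [hμ₀def, Measure.restrict_apply hE, hmub _ (hE.inter hFtmeas)]
  set dj : ℕ → Set X := disjointed ex with hdjdef
  have hdjmeas : ∀ n, MeasurableSet (dj n) := MeasurableSet.disjointed hexmeas
  have hdjsub : ∀ n, dj n ⊆ ex n := disjointed_subset ex
  have hdjU : ⋃ n, dj n = Ft := by rw [hdjdef, iUnion_disjointed, hexunion]
  have hpairdj : Pairwise (Function.onFun Disjoint dj) := disjoint_disjointed ex
  have hEdecomp : ∀ (E : Set X) (F : Set Y), MeasurableSet E → MeasurableSet F →
      σ ((E ∩ Ft) ×ˢ F) = ∑' n, σ ((E ∩ dj n) ×ˢ F) := by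
    intro E F hE hF
    have h1 : (E ∩ Ft) ×ˢ F = ⋃ n, (E ∩ dj n) ×ˢ F := by
      rw [← Set.iUnion_prod_const, ← Set.inter_iUnion, hdjU]
    rw [h1, measure_iUnion ?_ (fun n => (hE.inter (hdjmeas n)).prod hF)]
    intro m n hmn
    refine Set.disjoint_prod.2 (Or.inl ?_)
    exact (hpairdj hmn).mono Set.inter_subset_right Set.inter_subset_right
  have hformula : ∀ (E : Set X) (F : Set Y), MeasurableSet E → MeasurableSet F →
      a * σ (E ×ˢ F) = μ₀ E * ν F := by
    intro E F hE hF
    have hkey : ∀ n : ℕ, a * σ ((E ∩ dj n) ×ˢ F) = σ ((E ∩ dj n) ×ˢ Y₀) * ν F := by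
      intro n
      refine keyE _ (hE.inter (hdjmeas n)) ?_ (fun k => ?_) F hF
      · refine lt_of_le_of_lt (measure_mono (Set.prod_mono_left ?_)) (hexfin n)
        exact Set.Subset.trans Set.inter_subset_right (hdjsub n)
      · refine lt_of_le_of_lt (measure_mono (Set.prod_mono_left ?_)) ((hhy1 k).2.2 n)
        exact Set.Subset.trans Set.inter_subset_right (hdjsub n)
    calc a * σ (E ×ˢ F) = a * σ ((E ∩ Ft) ×ˢ F) := by rw [hsplitX]
      _ = a * ∑' n, σ ((E ∩ dj n) ×ˢ F) := by rw [hEdecomp E F hE hF]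
      _ = ∑' n, a * σ ((E ∩ dj n) ×ˢ F) := by rw [ENNReal.tsum_mul_left]
      _ = ∑' n, σ ((E ∩ dj n) ×ˢ Y₀) * ν F := by exact tsum_congr hkey
      _ = (∑' n, σ ((E ∩ dj n) ×ˢ Y₀)) * ν F := by rw [ENNReal.tsum_mul_right]
      _ = σ ((E ∩ Ft) ×ˢ Y₀) * ν F := by rw [hEdecomp E Y₀ hE hY₀]
      _ = μ₀ E * ν F := by rw [hμ₀ap E hE]
  -- properties of μ₀
  haveI hμ₀sf : SigmaFinite μ₀ := by
    refine ⟨⟨⟨fun n => if n = 0 then Ftᶜ else ex (n - 1) ∪ Ftᶜ, fun _ => trivial,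
      fun n => ?_, ?_⟩⟩⟩
    · skip
      by_cases h : n = 0
      · rw [if_pos h, hμ₀ap _ hFtmeas.compl]
        simp
      · rw [if_neg h, hμ₀ap _ ((hexmeas (n - 1)).union hFtmeas.compl)]
        refine lt_of_le_of_lt (measure_mono ?_) (hexfin (n - 1))
        rintro ⟨x, y⟩ ⟨⟨hx1, hx2⟩, hy⟩
        rcases hx1 with hx1 | hx1
        · exact ⟨hx1, hy⟩
        · exact absurd hx2 hx1
    · apply Set.eq_univ_of_forall
      intro x
      by_cases hxF : x ∈ Ft
      · rw [← hexunion] at hxF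
        obtain ⟨k, hk⟩ := Set.mem_iUnion.1 hxF
        exact Set.mem_iUnion.2 ⟨k + 1, by simp [hk]⟩
      · exact Set.mem_iUnion.2 ⟨0, by simp [hxF]⟩
  have hμ₀T : μ₀.map T = μ₀ := by
    refine Measure.ext fun E hE => ?_
    rw [Measure.map_apply hT hE, hμ₀ap _ (hT hE), hμ₀ap _ hE]
    have h1 : T ⁻¹' E ∩ Ft = T ⁻¹' (E ∩ Ft) := by rw [Set.preimage_inter, hFtpre]
    rw [h1]
    have h2 : (T ⁻¹' (E ∩ Ft)) ×ˢ Y₀ = V ⁻¹' ((E ∩ Ft) ×ˢ Y₀) := by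
      rw [hVdef, Set.preimage_prod_map_prod, Set.preimage_id]
    rw [h2, hVpre _ ((hE.inter hFtmeas).prod hY₀)]
  have hμ₀X₀ : μ₀ X₀ = a := by
    rw [hμ₀ap _ hX₀, hsplitX X₀ Y₀]
  -- final assembly
  set μ : Measure X := a⁻¹ • μ₀ with hμdef
  have hμap : ∀ E : Set X, μ E = a⁻¹ * μ₀ E := fun E => by
    rw [hμdef, Measure.smul_apply, smul_eq_mul]
  haveI hμsf : SigmaFinite μ := by
    refine ⟨⟨⟨fun n => spanningSets μ₀ n, fun _ => trivial, fun n => ?_, ?_⟩⟩⟩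
    · rw [hμap]
      exact ENNReal.mul_lt_top (ENNReal.inv_lt_top.2 (pos_iff_ne_zero.2 ha0))
        (measure_spanningSets_lt_top μ₀ n)
    · exact iUnion_spanningSets μ₀
  have hμT : μ.map T = μ := by
    rw [hμdef, Measure.map_smul, hμ₀T]
  have rect : ∀ (s : Set X) (t : Set Y), MeasurableSet s → MeasurableSet t →
      σ (s ×ˢ t) = μ s * ν t := by
    intro s t hs ht
    have h := hformula s t hs ht
    calc σ (s ×ˢ t) = a⁻¹ * (a * σ (s ×ˢ t)) := by
          rw [← mul_assoc, ENNReal.inv_mul_cancel ha0 haT, one_mul]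
      _ = a⁻¹ * (μ₀ s * ν t) := by rw [h]
      _ = (a⁻¹ * μ₀ s) * ν t := by rw [mul_assoc]
      _ = μ s * ν t := by rw [hμap]
  have hσprod : σ = μ.prod ν :=
    (Measure.prod_eq fun s t hs ht => rect s t hs ht).symm
  have hνuniv : ν Set.univ ≠ 0 := by
    intro h0
    exact ha0 (by rw [← hνY₀]; exact measure_mono_null (Set.subset_univ Y₀) h0)
  have hμuniv : μ Set.univ ≠ 0 := by
    intro h0
    have h1 : μ X₀ = 0 := measure_mono_null (Set.subset_univ X₀) h0
    rw [hμap, hμ₀X₀, ENNReal.inv_mul_cancel ha0 haT] at h1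
    exact one_ne_zero h1
  -- surjectivity facts
  have hTsurj : Function.Surjective T := hTr.surjective
  have hTinvsurj : Function.Surjective Tinv := hTl.surjective
  have hSsurj : Function.Surjective S := hSr.surjective
  have hSinvsurj : Function.Surjective Sinv := hSl.surjective
  -- image identities
  have himgX : ∀ (j : ℤ) (W : Set X),
      zIt U Ui j '' (W ×ˢ (Set.univ : Set Y)) = (zIt T Tinv j '' W) ×ˢ (Set.univ : Set Y) := by
    intro j W
    rw [hUdef, hUidef, zIt_prod, prodmap_image_prod]
    congr 1
    rw [Set.image_univ]
    exact (zIt_surjective hSsurj hSinvsurj j).range_eq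
  have himgY : ∀ (j : ℤ) (W : Set Y),
      zIt U Ui j '' ((Set.univ : Set X) ×ˢ W) = (Set.univ : Set X) ×ˢ (zIt S Sinv j '' W) := by
    intro j W
    rw [hUdef, hUidef, zIt_prod, prodmap_image_prod]
    congr 1
    rw [Set.image_univ]
    exact (zIt_surjective hTsurj hTinvsurj j).range_eq
  refine ⟨μ, ν, hμsf, hνsf, hμT, hνS, hσprod, ?_, ?_, ?_, ?_⟩
  · -- conservativity of μ
    intro W hW hwan
    have hwan2 : ZWandering (fun j : ℤ =>
        if 0 ≤ j then (Prod.map T S)^[j.toNat] else (Prod.map Tinv Sinv)^[(-j).toNat])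
        (W ×ˢ (Set.univ : Set Y)) := by
      intro j k hjk
      have hj := himgX j W
      have hk := himgX k W
      rw [hUdef, hUidef] at hj hk
      show Disjoint (zIt (Prod.map T S) (Prod.map Tinv Sinv) j '' (W ×ˢ Set.univ))
        (zIt (Prod.map T S) (Prod.map Tinv Sinv) k '' (W ×ˢ Set.univ))
      rw [hj, hk]
      exact Set.disjoint_prod.2 (Or.inl (hwan j k hjk))
    have h0 := hcons _ (hW.prod MeasurableSet.univ) hwan2
    rw [hσprod, Measure.prod_prod] at h0
    rcases mul_eq_zero.1 h0 with h | h
    · exact h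
    · exact absurd h hνuniv
  · -- ergodicity of μ
    intro A hA hTA
    have hUinv : U ⁻¹' (A ×ˢ (Set.univ : Set Y)) = A ×ˢ (Set.univ : Set Y) := by
      rw [hUdef, Set.preimage_prod_map_prod, Set.preimage_univ, hTA]
    rcases herg _ (hA.prod MeasurableSet.univ) hUinv with h | h
    · left
      rw [hσprod, Measure.prod_prod] at h
      rcases mul_eq_zero.1 h with h | h
      · exact h
      · exact absurd h hνuniv
    · right
      have hcompl : (A ×ˢ (Set.univ : Set Y))ᶜ = Aᶜ ×ˢ (Set.univ : Set Y) := by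
        ext z
        simp [Set.mem_prod]
      rw [hcompl, hσprod, Measure.prod_prod] at h
      rcases mul_eq_zero.1 h with h | h
      · exact h
      · exact absurd h hνuniv
  · -- conservativity of ν
    intro W hW hwan
    have hwan2 : ZWandering (fun j : ℤ =>
        if 0 ≤ j then (Prod.map T S)^[j.toNat] else (Prod.map Tinv Sinv)^[(-j).toNat])
        ((Set.univ : Set X) ×ˢ W) := by
      intro j k hjk
      have hj := himgY j W
      have hk := himgY k W
      rw [hUdef, hUidef] at hj hk
      show Disjoint (zIt (Prod.map T S) (Prod.map Tinv Sinv) j '' (Set.univ ×ˢ W))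
        (zIt (Prod.map T S) (Prod.map Tinv Sinv) k '' (Set.univ ×ˢ W))
      rw [hj, hk]
      exact Set.disjoint_prod.2 (Or.inr (hwan j k hjk))
    have h0 := hcons _ (MeasurableSet.univ.prod hW) hwan2
    rw [hσprod, Measure.prod_prod] at h0
    rcases mul_eq_zero.1 h0 with h | h
    · exact absurd h hμuniv
    · exact h
  · -- ergodicity of ν
    intro A hA hSA
    have hUinv : U ⁻¹' ((Set.univ : Set X) ×ˢ A) = (Set.univ : Set X) ×ˢ A := by
      rw [hUdef, Set.preimage_prod_map_prod, Set.preimage_univ, hSA]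
    rcases herg _ (MeasurableSet.univ.prod hA) hUinv with h | h
    · left
      rw [hσprod, Measure.prod_prod] at h
      rcases mul_eq_zero.1 h with h | h
      · exact absurd h hμuniv
      · exact h
    · right
      have hcompl : ((Set.univ : Set X) ×ˢ A)ᶜ = (Set.univ : Set X) ×ˢ Aᶜ := by
        ext z
        simp [Set.mem_prod]
      rw [hcompl, hσprod, Measure.prod_prod] at h
      rcases mul_eq_zero.1 h with h | h
      · exact absurd h hμuniv
      · exact h


end PTAux

/-- **Theorem (product theorem).**  Let `X` and `Y` be standard Borel spaces,
`T : X → X` and `S : Y → Y` invertible bi-measurable transformations, and `σ` a σ-finite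
measure on `X × Y` such that: some product set `X₀ × Y₀` has finite positive measure;
`σ` is `T×S`-invariant; `(X×Y, T×S, σ)` is conservative and ergodic; and `Id×S` is
nonsingular with respect to `σ`.  Then `σ` is `Id×S`-invariant and `σ = μ ⊗ ν` for some
`T`-invariant measure `μ` on `X` and `S`-invariant measure `ν` on `Y`; moreover the
systems `(X, μ, T)` and `(Y, ν, S)` are conservative and ergodic. -/
theorem product_theorem {X Y : Type*} [MeasurableSpace X] [StandardBorelSpace X]
    [MeasurableSpace Y] [StandardBorelSpace Y]
    (T : X → X) (Tinv : X → X) (hT : Measurable T) (hTinv : Measurable Tinv)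
    (hTl : Function.LeftInverse Tinv T) (hTr : Function.RightInverse Tinv T)
    (S : Y → Y) (Sinv : Y → Y) (hS : Measurable S) (hSinv : Measurable Sinv)
    (hSl : Function.LeftInverse Sinv S) (hSr : Function.RightInverse Sinv S)
    (σ : Measure (X × Y)) [SigmaFinite σ]
    (X₀ : Set X) (Y₀ : Set Y) (hX₀ : MeasurableSet X₀) (hY₀ : MeasurableSet Y₀)
    (hpos : 0 < σ (X₀ ×ˢ Y₀)) (hfin : σ (X₀ ×ˢ Y₀) < ⊤)
    (hinv : σ.map (Prod.map T S) = σ)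
    (hcons : ZConservative σ (fun j : ℤ =>
      if 0 ≤ j then (Prod.map T S)^[j.toNat] else (Prod.map Tinv Sinv)^[(-j).toNat]))
    (herg : MeasErgodic σ (Prod.map T S))
    (hns1 : σ.map (Prod.map (id : X → X) S) ≪ σ)
    (hns2 : σ ≪ σ.map (Prod.map (id : X → X) S)) :
    σ.map (Prod.map (id : X → X) S) = σ ∧
    ∃ (μ : Measure X) (ν : Measure Y),
      SigmaFinite μ ∧ SigmaFinite ν ∧
      μ.map T = μ ∧ ν.map S = ν ∧ σ = μ.prod ν ∧
      ZConservative μ (fun j : ℤ => if 0 ≤ j then T^[j.toNat] else Tinv^[(-j).toNat]) ∧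
      MeasErgodic μ T ∧
      ZConservative ν (fun j : ℤ => if 0 ≤ j then S^[j.toNat] else Sinv^[(-j).toNat]) ∧
      MeasErgodic ν S := by
  have h1 := PTAux.step1 T Tinv hT hTinv hTl hTr S Sinv hS hSinv hSl hSr σ X₀ Y₀ hX₀ hY₀
    hpos hfin hinv hcons herg hns1 hns2
  exact ⟨h1, PTAux.step2 T Tinv hT hTinv hTl hTr S Sinv hS hSinv hSl hSr σ X₀ Y₀ hX₀ hY₀
    hpos hfin hinv hcons herg h1⟩
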